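/- arXiv:1409.0299 — 8 statements merged into one kernel-verified Lean document; each statement's English description precedes it below -/
import Mathlib

section
/- Let A ⊆ B be an extension of commutative rings and M ⊆ N an extension of positive commutative cancellative torsion-free monoids. If the canonical group homomorphism θ : 𝓘(A,B) → 𝓘(A[M],B[N]), sending an invertible A-submodule I of B to the A[M]-submodule of B[N] generated by I, is an isomorphism, then B is reduced or M = N. -/
open scoped Classical

noncomputable section

/-- `A` is subintegrally closed in its ambient ring `B`:
every `b : B` with `b² ∈ A` and `b³ ∈ A` lies in `A`. -/
def Subring.IsSubintegrallyClosedIn {B : Type*} [CommRing B] (A : Subring B) : Prop :=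
  ∀ b : B, b ^ 2 ∈ A → b ^ 3 ∈ A → b ∈ A

/-- `M` is subintegrally closed in its ambient monoid `N`:
every `x : N` with `x² ∈ M` and `x³ ∈ M` lies in `M`. -/
def Submonoid.IsSubintegrallyClosedIn {N : Type*} [CommMonoid N] (M : Submonoid N) : Prop :=
  ∀ x : N, x ^ 2 ∈ M → x ^ 3 ∈ M → x ∈ M

/-- A commutative monoid is torsion-free. -/
def MulTorsionFree (N : Type*) [CommMonoid N] : Prop :=
  ∀ (x y : N) (n : ℕ), n ≠ 0 → x ^ n = y ^ n → x = y

/-- A commutative monoid is positive if its only unit is the identity. -/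
def IsPositiveMonoid (N : Type*) [CommMonoid N] : Prop :=
  ∀ x : N, IsUnit x → x = 1

/-- The subring `A[M]` of the monoid algebra `B[N]`, for a subring `A ⊆ B` and a submonoid
`M ⊆ N`: the subring generated by the elements `a·m` (`a ∈ A`, `m ∈ M`); equivalently, the set
of elements of `B[N]` supported on `M` with all coefficients in `A`. -/
def monoidAlgebraSubring {B : Type*} [CommRing B] {N : Type*} [CommMonoid N]
    (A : Subring B) (M : Submonoid N) : Subring (MonoidAlgebra B N) :=
  Subring.closure {x | ∃ a ∈ A, ∃ m ∈ M, x = MonoidAlgebra.single m a}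

/-- The canonical group homomorphism `θ : 𝓘(A,B) → 𝓘(A[M],B[N])`, sending an invertible
`A`-submodule `I` of `B` to the `A[M]`-submodule of `B[N]` generated by (the image of) `I`,
is an isomorphism of groups.  This is phrased as: there is a group isomorphism
`𝓘(A,B) ≃* 𝓘(A[M],B[N])` whose underlying map is the canonical one. -/
def ThetaIsIso {B : Type*} [CommRing B] {N : Type*} [CancelCommMonoid N]
    (A : Subring B) (M : Submonoid N) : Prop :=
  ∃ e : (Submodule A B)ˣ ≃* (Submodule (monoidAlgebraSubring A M) (MonoidAlgebra B N))ˣ,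
    ∀ I : (Submodule A B)ˣ,
      (e I : Submodule (monoidAlgebraSubring A M) (MonoidAlgebra B N)) =
        Submodule.span (monoidAlgebraSubring A M)
          (⇑(MonoidAlgebra.singleOneRingHom : B →+* MonoidAlgebra B N) ''
            ((I : Submodule A B) : Set B))

section Aux

variable {B : Type*} [CommRing B] {N : Type*} [CancelCommMonoid N]

/-- Elements of `B[N]` supported on `M` form a subring. -/
def suppSubring (M : Submonoid N) : Subring (MonoidAlgebra B N) where
  carrier := {r | ↑r.coeff.support ⊆ (M : Set N)}
  one_mem' := by
    intro k hk
    have := Finsupp.support_single_subset (a := (1 : N)) (b := (1 : B))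
    have hk' := this (by simpa [MonoidAlgebra.one_def, MonoidAlgebra.coeff_single] using hk)
    simp only [Finset.mem_singleton] at hk'
    simpa [hk'] using M.one_mem
  mul_mem' := by
    intro f g hf hg k hk
    have := MonoidAlgebra.support_coeff_mul_subset f g hk
    rcases Finset.mem_mul.mp this with ⟨p, hp, q, hq, rfl⟩
    exact M.mul_mem (hf hp) (hg hq)
  add_mem' := by
    intro f g hf hg k hk
    rcases Finset.mem_union.mp (Finsupp.support_add hk) with h | h
    · exact hf h
    · exact hg h
  zero_mem' := by simp
  neg_mem' := by
    intro f hf k hk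
    rw [MonoidAlgebra.coeff_neg, Finsupp.support_neg] at hk
    exact hf hk

lemma monoidAlgebraSubring_le_suppSubring {A : Subring B} {M : Submonoid N} :
    monoidAlgebraSubring A M ≤ suppSubring M := by
  apply Subring.closure_le.mpr
  rintro x ⟨a, ha, m, hm, rfl⟩
  intro k hk
  have hk' := Finsupp.support_single_subset hk
  simp only [Finset.mem_singleton] at hk'
  simpa [hk'] using hm

/-- Elements of `B[N]` supported on `M` form an `A[M]`-submodule. -/
def suppSubmodule (A : Subring B) (M : Submonoid N) :
    Submodule (monoidAlgebraSubring A M) (MonoidAlgebra B N) where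
  carrier := (suppSubring (B := B) M : Set (MonoidAlgebra B N))
  add_mem' := fun h1 h2 => add_mem h1 h2
  zero_mem' := zero_mem _
  smul_mem' := by
    intro c x hx
    have hc : (↑c : MonoidAlgebra B N) ∈ suppSubring M :=
      monoidAlgebraSubring_le_suppSubring c.2
    have hcx : (c • x : MonoidAlgebra B N) = ↑c * x := rfl
    show (c • x : MonoidAlgebra B N) ∈ suppSubring M
    rw [hcx]
    exact mul_mem hc hx

lemma not_isReduced_exists {B : Type*} [CommRing B] (h : ¬ IsReduced B) :
    ∃ b : B, b ≠ 0 ∧ b * b = 0 := by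
  rw [isReduced_iff] at h
  push_neg at h
  obtain ⟨x, ⟨n, hn⟩, hx⟩ := h
  have hex : ∃ k, x ^ k = 0 := ⟨n, hn⟩
  classical
  set m := Nat.find hex with hm
  have hxm : x ^ m = 0 := Nat.find_spec hex
  have hm2 : 2 ≤ m := by
    rcases Nat.lt_or_ge m 2 with h' | h'
    · interval_cases m
      · exfalso
        have : (1 : B) = 0 := by simpa using hxm
        exact hx (by simpa using congrArg (· * x) this)
      · exact absurd (by simpa using hxm) hx
    · exact h'
  refine ⟨x ^ (m - 1), ?_, ?_⟩
  · exact Nat.find_min hex (by omega)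
  · rw [← pow_add]
    have : m - 1 + (m - 1) = m + (m - 2) := by omega
    rw [this, pow_add, hxm, zero_mul]

end Aux

/-- **Sarwar, Theorem 1.2(d)(iii).**  If the canonical map `θ : 𝓘(A,B) → 𝓘(A[M],B[N])` is an
isomorphism, then `B` is reduced or `M = N`. -/
theorem isReduced_or_eq_top_of_theta_isIso
    {B : Type*} [CommRing B] (A : Subring B)
    {N : Type*} [CancelCommMonoid N] (M : Submonoid N)
    (htf : MulTorsionFree N) (hpos : IsPositiveMonoid N)
    (h : ThetaIsIso A M) :
    IsReduced B ∨ M = ⊤ := by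
  by_cases hred : IsReduced B
  · exact Or.inl hred
  right
  by_contra hM
  obtain ⟨n, hn⟩ : ∃ n : N, n ∉ M := by
    by_contra h'
    push_neg at h'
    exact hM (top_unique fun x _ => h' x)
  obtain ⟨b, hb0, hb2⟩ := not_isReduced_exists hred
  obtain ⟨e, he⟩ := h
  set u : MonoidAlgebra B N := 1 + MonoidAlgebra.single n b with hu
  set v : MonoidAlgebra B N := 1 - MonoidAlgebra.single n b with hv
  have huv : u * v = 1 := by
    rw [hu, hv]
    ring_nf
    rw [pow_two, MonoidAlgebra.single_mul_single, hb2]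
    simp
  have hspan : (Submodule.span (monoidAlgebraSubring A M) {u}) * (Submodule.span (monoidAlgebraSubring A M) {v}) = 1 := by
    rw [Submodule.span_mul_span, Set.singleton_mul_singleton, huv,
      ← Submodule.one_eq_span]
  have hspan2 : (Submodule.span (monoidAlgebraSubring A M) {v}) * (Submodule.span (monoidAlgebraSubring A M) {u}) = 1 := by
    rw [Submodule.span_mul_span, Set.singleton_mul_singleton, mul_comm v u, huv,
      ← Submodule.one_eq_span]
  set U : (Submodule (monoidAlgebraSubring A M) (MonoidAlgebra B N))ˣ :=
    ⟨Submodule.span (monoidAlgebraSubring A M) {u}, Submodule.span (monoidAlgebraSubring A M) {v}, hspan, hspan2⟩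
  obtain ⟨I, hI⟩ := e.surjective U
  have hIeq : Submodule.span (monoidAlgebraSubring A M)
      (⇑(MonoidAlgebra.singleOneRingHom : B →+* MonoidAlgebra B N) ''
        ((I : Submodule A B) : Set B)) = Submodule.span (monoidAlgebraSubring A M) {u} := by
    rw [← he I, hI]
  have hmem : u ∈ Submodule.span (monoidAlgebraSubring A M)
      (⇑(MonoidAlgebra.singleOneRingHom : B →+* MonoidAlgebra B N) ''
        ((I : Submodule A B) : Set B)) := by
    rw [hIeq]
    exact Submodule.mem_span_singleton_self u
  have hsub : Submodule.span (monoidAlgebraSubring A M)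
      (⇑(MonoidAlgebra.singleOneRingHom : B →+* MonoidAlgebra B N) ''
        ((I : Submodule A B) : Set B)) ≤ suppSubmodule A M := by
    apply Submodule.span_le.mpr
    rintro x ⟨c, -, rfl⟩
    intro k hk
    have hk' := Finsupp.support_single_subset
      (a := (1 : N)) (b := c) (by simpa [MonoidAlgebra.singleOneRingHom, MonoidAlgebra.coeff_single] using hk)
    simp only [Finset.mem_singleton] at hk'
    rw [hk']
    exact M.one_mem
  have hu_supp : ↑u.coeff.support ⊆ (M : Set N) := hsub hmem
  have hun : u.coeff n = b := by
    rw [hu, MonoidAlgebra.one_def]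
    have hn1 : n ≠ 1 := fun h' => hn (h' ▸ M.one_mem)
    rw [MonoidAlgebra.coeff_add, MonoidAlgebra.coeff_single, MonoidAlgebra.coeff_single, Finsupp.add_apply, Finsupp.single_apply, Finsupp.single_apply]
    rw [if_neg (by exact fun h' => hn1 h'.symm), if_pos rfl]
    simp
  exact hn (hu_supp (by simp [Finsupp.mem_support_iff, hun, hb0]))
end
end

section
/- Let A ⊆ B be an extension of commutative rings and M ⊆ N an extension of positive commutative cancellative torsion-free monoids with N affine (finitely generated), such that A is subintegrally closed in B and M is subintegrally closed in N. If A[M] is subintegrally closed in B[N], then B is reduced or M = N. -/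
open scoped Classical

noncomputable section

/-- **Sarwar, Corollary 1.3(ii).**  If `A ⊆ B` is subintegrally closed, `M ⊆ N` is a
subintegrally closed extension of positive commutative cancellative torsion-free monoids with
`N` affine (finitely generated), and `A[M]` is subintegrally closed in `B[N]`, then `B` is
reduced or `M = N`. -/
theorem isReduced_or_eq_top_of_monoidAlgebra_subintegrallyClosed
    {B : Type*} [CommRing B] (A : Subring B)
    {N : Type*} [CancelCommMonoid N] (M : Submonoid N)
    (htf : MulTorsionFree N) (hpos : IsPositiveMonoid N) (hfg : Monoid.FG N)
    (hA : A.IsSubintegrallyClosedIn) (hM : M.IsSubintegrallyClosedIn)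
    (hAM : (monoidAlgebraSubring A M).IsSubintegrallyClosedIn) :
    IsReduced B ∨ M = ⊤ := by
  by_contra h
  push_neg at h
  obtain ⟨hB, hMN⟩ := h
  -- an element of `N` outside `M`
  obtain ⟨n, hn⟩ : ∃ n : N, n ∉ M := by
    by_contra h'
    push_neg at h'
    exact hMN ((Submonoid.eq_top_iff' M).mpr h')
  -- an element of `B` with square zero
  rw [isReduced_iff] at hB
  push_neg at hB
  obtain ⟨b, ⟨k, hk⟩, hb0⟩ := hB
  obtain ⟨c, hc0, hc2⟩ : ∃ c : B, c ≠ 0 ∧ c ^ 2 = 0 := by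
    have hex : ∃ m, b ^ m = 0 := ⟨k, hk⟩
    set k0 := Nat.find hex with hk0
    have hk0z : b ^ k0 = 0 := Nat.find_spec hex
    have h2 : 2 ≤ k0 := by
      by_contra hlt
      push_neg at hlt
      interval_cases k0
      · simp at hk0z
        exact hb0 (by simpa using congrArg (· * b) hk0z)
      · exact hb0 (by simpa using hk0z)
    refine ⟨b ^ (k0 - 1), Nat.find_min hex (by omega), ?_⟩
    rw [← pow_mul]
    have : b ^ ((k0 - 1) * 2) = b ^ k0 * b ^ (k0 - 2) := by
      rw [← pow_add]
      congr 1
      omega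
    rw [this, hk0z, zero_mul]
  have hc3 : c ^ 3 = 0 := by
    have : c ^ 3 = c ^ 2 * c := by ring
    rw [this, hc2, zero_mul]
  set x : MonoidAlgebra B N := MonoidAlgebra.single n c with hx
  have hx2 : x ^ 2 = 0 := by
    rw [hx, MonoidAlgebra.single_pow, hc2]; exact MonoidAlgebra.single_zero _
  have hx3 : x ^ 3 = 0 := by
    rw [hx, MonoidAlgebra.single_pow, hc3]; exact MonoidAlgebra.single_zero _
  have hxmem : x ∈ monoidAlgebraSubring A M :=
    hAM x (hx2 ▸ Subring.zero_mem _) (hx3 ▸ Subring.zero_mem _)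
  have hle : monoidAlgebraSubring A M ≤
      (MonoidAlgebra.mapDomainRingHom B M.subtype).range := by
    apply Subring.closure_le.mpr
    rintro _ ⟨a, _, m, hm, rfl⟩
    exact ⟨MonoidAlgebra.single ⟨m, hm⟩ a, by
      simp [MonoidAlgebra.mapDomainRingHom, Finsupp.mapDomain_single]⟩
  obtain ⟨g, hg⟩ := hle hxmem
  have hzero : x.coeff n = 0 := by
    rw [← hg]
    show Finsupp.mapDomain (M.subtype) g.coeff n = 0
    refine Finsupp.mapDomain_notin_range g.coeff n ?_
    rintro ⟨⟨m, hm⟩, rfl⟩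
    exact hn hm
  rw [hx, MonoidAlgebra.coeff_single, Finsupp.single_eq_same] at hzero
  exact hc0 hzero
end
end

section
/- Let A ⊆ B be an extension of commutative rings and let r > 0 be an integer. Then A is subintegrally closed in B if and only if the polynomial ring A[X₁,…,X_r] is subintegrally closed in B[X₁,…,X_r]. -/
open scoped Classical

noncomputable section

namespace SIC
variable {B : Type*} [CommRing B] (A : Subring B)

open Polynomial MvPolynomial


/-- power descent -/
theorem descent (hA : A.IsSubintegrallyClosedIn) (b : B) :
    ∀ K : ℕ, (∀ k, K ≤ k → b ^ k ∈ A) → b ∈ A := by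
  intro K
  induction K with
  | zero => intro h; simpa using h 1 (by omega)
  | succ K ih =>
    intro h
    apply ih
    intro k hk
    rcases Nat.lt_or_ge k (K+1) with hlt | hge
    · -- k = K
      have hkK : K = k := by omega
      subst hkK
      rcases Nat.eq_zero_or_pos K with h0 | hpos
      · rw [h0]; simpa using A.one_mem
      · apply hA
        · rw [← pow_mul]; exact h (K*2) (by omega)
        · rw [← pow_mul]; exact h (K*3) (by omega)
    · exact h k hge



theorem cw_mul {p q : Polynomial B} (hp : ∀ n, p.coeff n ∈ A) (hq : ∀ n, q.coeff n ∈ A) :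
    ∀ n, (p*q).coeff n ∈ A := by
  intro n
  rw [Polynomial.coeff_mul]
  exact Subring.sum_mem _ (fun x _ => A.mul_mem (hp _) (hq _))

theorem cw_pow {p : Polynomial B} (hp : ∀ n, p.coeff n ∈ A) (k : ℕ) :
    ∀ n, (p^k).coeff n ∈ A := by
  induction k with
  | zero => intro n; simp [Polynomial.coeff_one]; split <;> simp [A.one_mem, A.zero_mem]
  | succ k ih => intro n; rw [pow_succ]; exact cw_mul A ih hp n

theorem cw_neg {p : Polynomial B} (hp : ∀ n, p.coeff n ∈ A) : ∀ n, (-p).coeff n ∈ A := by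
  intro n; rw [Polynomial.coeff_neg]; exact A.neg_mem (hp n)




theorem low_pow {h : Polynomial B} {m : ℕ} (hlow : ∀ j, j < m → h.coeff j = 0) :
    ∀ k : ℕ, (∀ j, j < k*m → (h^k).coeff j = 0) ∧ (h^k).coeff (k*m) = (h.coeff m)^k := by
  intro k
  induction k with
  | zero => refine ⟨fun j hj => by omega, by simp⟩
  | succ k ih =>
    have hexp : (k+1)*m = k*m + m := by ring
    constructor
    · intro j hj
      rw [pow_succ, Polynomial.coeff_mul]
      apply Finset.sum_eq_zero
      intro x hx
      rw [Finset.HasAntidiagonal.mem_antidiagonal] at hx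
      rcases Nat.lt_or_ge x.1 (k*m) with h1 | h1
      · rw [ih.1 x.1 h1, zero_mul]
      · have h2 : x.2 < m := by omega
        rw [hlow x.2 h2, mul_zero]
    · rw [pow_succ, Polynomial.coeff_mul]
      rw [Finset.sum_eq_single (k*m, m)]
      · rw [ih.2, pow_succ]
      · intro x hx hne
        rw [Finset.HasAntidiagonal.mem_antidiagonal] at hx
        rcases Nat.lt_or_ge x.1 (k*m) with h1 | h1
        · rw [ih.1 x.1 h1, zero_mul]
        · rcases Nat.lt_or_ge x.2 m with h2 | h2
          · rw [hlow x.2 h2, mul_zero]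
          · exfalso; apply hne
            have : x.1 = k*m := by omega
            have h4 : x.2 = m := by omega
            exact Prod.ext this h4
      · intro hnot
        exfalso; apply hnot
        rw [Finset.HasAntidiagonal.mem_antidiagonal]
        omega




theorem key1 (hA : A.IsSubintegrallyClosedIn) (f : Polynomial B)
    (h2 : ∀ n, (f^2).coeff n ∈ A) (h3 : ∀ n, (f^3).coeff n ∈ A) :
    ∀ n, f.coeff n ∈ A := by
  have hone : ∀ n, (1 : Polynomial B).coeff n ∈ A := by
    intro n
    rw [Polynomial.coeff_one]
    split <;> simp [A.one_mem, A.zero_mem]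
  have hpow : ∀ k, 2 ≤ k → ∀ n, (f^k).coeff n ∈ A := by
    intro k
    induction k using Nat.strong_induction_on with
    | _ k ih =>
      intro hk n
      rcases Nat.lt_or_ge k 4 with h4 | h4
      · interval_cases k
        · exact h2 n
        · exact h3 n
      · have hsplit : f^k = f^2 * f^(k-2) := by
          rw [← pow_add]; congr 1; omega
        rw [hsplit]
        exact cw_mul A h2 (fun n => ih (k-2) (by omega) (by omega) n) n
  intro m
  induction m using Nat.strong_induction_on with
  | _ m ih =>
  set n := f.natDegree with hn
  set g : Polynomial B := ∑ j ∈ Finset.range m, Polynomial.C (f.coeff j) * Polynomial.X ^ j with hg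
  have hgcoeff : ∀ j, g.coeff j = if j < m then f.coeff j else 0 := by
    intro j
    rw [hg, Polynomial.finset_sum_coeff]
    simp only [Polynomial.coeff_C_mul, Polynomial.coeff_X_pow, mul_ite, mul_one, mul_zero]
    rw [Finset.sum_ite_eq (Finset.range m) j (fun i => f.coeff i)]
    simp [Finset.mem_range]
  have hgA : ∀ j, g.coeff j ∈ A := by
    intro j
    rw [hgcoeff]
    split
    · exact ih j (by assumption)
    · exact A.zero_mem
  set h : Polynomial B := f - g with hh
  have hlow : ∀ j, j < m → h.coeff j = 0 := by
    intro j hj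
    rw [hh, Polynomial.coeff_sub, hgcoeff, if_pos hj, sub_self]
  have hcm : h.coeff m = f.coeff m := by
    rw [hh, Polynomial.coeff_sub, hgcoeff, if_neg (lt_irrefl m), sub_zero]
  -- the j=1 binomial term has zero coefficient at k*m
  have hmid : ∀ k, n + 2 ≤ k → (f * (-g)^(k-1)).coeff (k*m) = 0 := by
    intro k hk
    rcases Nat.eq_zero_or_pos m with hm0 | hmpos
    · have hg0 : g = 0 := by rw [hg, hm0]; simp
      rw [hg0, neg_zero, zero_pow (by omega : k - 1 ≠ 0), mul_zero, Polynomial.coeff_zero]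
    · apply Polynomial.coeff_eq_zero_of_natDegree_lt
      have hb1 : (f * (-g)^(k-1)).natDegree ≤ n + (k-1)*(m-1) := by
        apply le_trans (Polynomial.natDegree_mul_le)
        apply Nat.add_le_add
        · exact le_refl n
        · apply le_trans (Polynomial.natDegree_pow_le)
          apply Nat.mul_le_mul_left
          rw [Polynomial.natDegree_neg]
          rw [Polynomial.natDegree_le_iff_coeff_eq_zero]
          intro N hN
          rw [hgcoeff]
          rw [if_neg (by omega)]
      apply lt_of_le_of_lt hb1
      obtain ⟨a, rfl⟩ : ∃ a, k = a + 1 := ⟨k - 1, by omega⟩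
      obtain ⟨c, rfl⟩ : ∃ c, m = c + 1 := ⟨m - 1, by omega⟩
      have hid : (a+1)*(c+1) = a*c + a + c + 1 := by ring
      have hid2 : (a+1-1)*(c+1-1) = a*c := by
        have h1 : a+1-1 = a := by omega
        have h2 : c+1-1 = c := by omega
        rw [h1, h2]
      omega
  have hbk : ∀ k, n + 2 ≤ k → (f.coeff m)^k ∈ A := by
    intro k hk
    rw [← hcm, ← (low_pow hlow k).2]
    have hfh : h = f + (-g) := by rw [hh]; ring
    rw [hfh, add_pow, Polynomial.finset_sum_coeff]
    apply Subring.sum_mem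
    intro i hi
    rw [Finset.mem_range] at hi
    by_cases hi1 : i = 1
    · subst hi1
      rw [← Polynomial.C_eq_natCast, Polynomial.coeff_mul_C, pow_one]
      rw [hmid k hk, zero_mul]
      exact A.zero_mem
    · have hfi : ∀ n', (f^i).coeff n' ∈ A := by
        rcases Nat.eq_zero_or_pos i with h0 | hpos
        · rw [h0, pow_zero]; exact hone
        · exact hpow i (by omega)
      rw [← Polynomial.C_eq_natCast, Polynomial.coeff_mul_C]
      exact A.mul_mem (cw_mul A hfi (cw_pow A (cw_neg A hgA) (k-i)) _) (natCast_mem A _)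
  exact descent A hA _ (n+2) hbk




theorem digits_inj {N : ℕ} (hN : 0 < N) :
    ∀ (r : ℕ) (s t : Fin r → ℕ), (∀ i, s i < N) → (∀ i, t i < N) →
      (∑ i, s i * N^(i:ℕ)) = (∑ i, t i * N^(i:ℕ)) → s = t := by
  intro r
  induction r with
  | zero => intro s t _ _ _; funext i; exact i.elim0
  | succ r ih =>
    intro s t hs ht hsum
    rw [Fin.sum_univ_succ, Fin.sum_univ_succ] at hsum
    have hfold : ∀ (u : Fin (r+1) → ℕ),
        (∑ i : Fin r, u i.succ * N^((i.succ : Fin (r+1)) : ℕ)) = N * ∑ i : Fin r, u i.succ * N^(i:ℕ) := by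
      intro u
      rw [Finset.mul_sum]
      apply Finset.sum_congr rfl
      intro i _
      rw [Fin.val_succ, pow_succ]
      ring
    rw [hfold s, hfold t] at hsum
    simp only [Fin.val_zero, pow_zero, mul_one] at hsum
    have h0 : s 0 = t 0 := by
      have h1 : (s 0 + N*(∑ i : Fin r, s i.succ * N^(i:ℕ))) % N
          = (t 0 + N*(∑ i : Fin r, t i.succ * N^(i:ℕ))) % N := by rw [hsum]
      rwa [Nat.add_mul_mod_self_left, Nat.add_mul_mod_self_left,
        Nat.mod_eq_of_lt (hs 0), Nat.mod_eq_of_lt (ht 0)] at h1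
    have htail : (∑ i : Fin r, s i.succ * N^(i:ℕ)) = ∑ i : Fin r, t i.succ * N^(i:ℕ) := by
      have hNe : N*(∑ i : Fin r, s i.succ * N^(i:ℕ)) = N*(∑ i : Fin r, t i.succ * N^(i:ℕ)) := by omega
      exact Nat.eq_of_mul_eq_mul_left hN hNe
    have hrec := ih (fun i => s i.succ) (fun i => t i.succ) (fun i => hs _) (fun i => ht _) htail
    funext i
    refine Fin.cases h0 (fun j => ?_) i
    exact congrFun hrec j

variable {r : ℕ}

/-- weight of a monomial -/
def wgt (N : ℕ) (s : Fin r →₀ ℕ) : ℕ := ∑ i : Fin r, s i * N^(i:ℕ)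

theorem phi_monomial (N : ℕ) (a : B) (s : Fin r →₀ ℕ) :
    MvPolynomial.aeval (fun i : Fin r => (Polynomial.X : Polynomial B)^(N^(i:ℕ)))
      (MvPolynomial.monomial s a)
    = Polynomial.C a * Polynomial.X ^ (wgt N s) := by
  rw [MvPolynomial.aeval_monomial]
  congr 1
  · have h1 : (s.prod fun i k => ((Polynomial.X : Polynomial B)^(N^(i:ℕ)))^k)
        = s.prod fun i k => (Polynomial.X : Polynomial B)^(N^(i:ℕ) * k) := by
      apply Finsupp.prod_congr
      intro i _
      rw [pow_mul]
    rw [h1]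
    rw [Finsupp.prod_fintype _ _ (fun i => by rw [mul_zero, pow_zero])]
    rw [Finset.prod_pow_eq_pow_sum]
    congr 1
    rw [wgt]
    apply Finset.sum_congr rfl
    intro i _
    ring

theorem phi_eq (N : ℕ) (F : MvPolynomial (Fin r) B) :
    MvPolynomial.aeval (fun i : Fin r => (Polynomial.X : Polynomial B)^(N^(i:ℕ))) F
    = ∑ s ∈ F.support, Polynomial.C (F.coeff s) * Polynomial.X ^ (wgt N s) := by
  conv_lhs => rw [MvPolynomial.as_sum F]
  rw [map_sum]
  exact Finset.sum_congr rfl (fun s _ => phi_monomial N _ s)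

theorem phi_cw (N : ℕ) (F : MvPolynomial (Fin r) B) (hF : ∀ s, F.coeff s ∈ A) :
    ∀ e, (MvPolynomial.aeval (fun i : Fin r => (Polynomial.X : Polynomial B)^(N^(i:ℕ))) F).coeff e ∈ A := by
  intro e
  rw [phi_eq, Polynomial.finset_sum_coeff]
  apply Subring.sum_mem
  intro s _
  rw [Polynomial.coeff_C_mul, Polynomial.coeff_X_pow]
  split
  · rw [mul_one]; exact hF s
  · rw [mul_zero]; exact A.zero_mem

theorem phi_extract (N : ℕ) (F : MvPolynomial (Fin r) B)
    (hinj : ∀ s ∈ F.support, ∀ t ∈ F.support, wgt N s = wgt N t → s = t)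
    (s₀ : Fin r →₀ ℕ) (hs₀ : s₀ ∈ F.support) :
    (MvPolynomial.aeval (fun i : Fin r => (Polynomial.X : Polynomial B)^(N^(i:ℕ))) F).coeff (wgt N s₀)
    = F.coeff s₀ := by
  rw [phi_eq, Polynomial.finset_sum_coeff]
  rw [Finset.sum_eq_single s₀]
  · rw [Polynomial.coeff_C_mul, Polynomial.coeff_X_pow, if_pos rfl, mul_one]
  · intro s hs hne
    rw [Polynomial.coeff_C_mul, Polynomial.coeff_X_pow]
    rw [if_neg (fun hEq => hne (hinj s hs s₀ hs₀ hEq.symm)), mul_zero]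
  · intro habs
    exact absurd hs₀ habs

theorem mem_range_iff (F : MvPolynomial (Fin r) B) :
    F ∈ ((MvPolynomial.map (A.subtype) :
        MvPolynomial (Fin r) A →+* MvPolynomial (Fin r) B).range)
    ↔ ∀ s, F.coeff s ∈ A := by
  constructor
  · rintro ⟨P, rfl⟩ s
    rw [MvPolynomial.coeff_map]
    exact (P.coeff s).2
  · intro h
    refine ⟨∑ s ∈ F.support, MvPolynomial.monomial s (⟨F.coeff s, h s⟩ : A), ?_⟩
    rw [map_sum]
    simp only [MvPolynomial.map_monomial]
    exact (MvPolynomial.as_sum F).symm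

end SIC

/-- **Sarwar, Lemma 2.2 (Sadhu–Singh).**  For an extension of commutative rings `A ⊆ B` and an
integer `r > 0`, `A` is subintegrally closed in `B` if and only if the polynomial ring
`A[X₁,…,X_r]` is subintegrally closed in `B[X₁,…,X_r]`. -/
theorem subintegrallyClosed_iff_mvPolynomial
    {B : Type*} [CommRing B] (A : Subring B) (r : ℕ) (hr : 0 < r) :
    A.IsSubintegrallyClosedIn ↔
      ((MvPolynomial.map (A.subtype) :
          MvPolynomial (Fin r) A →+* MvPolynomial (Fin r) B).range).IsSubintegrallyClosedIn := by
  constructor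
  · intro hA F h2 h3
    rw [SIC.mem_range_iff] at h2 h3 ⊢
    set N : ℕ := F.totalDegree + 1 with hN
    set Φ := MvPolynomial.aeval (R := B) (fun i : Fin r => (Polynomial.X : Polynomial B)^(N^(i:ℕ))) with hΦ
    have hcoeffs : ∀ n, (Φ F).coeff n ∈ A := by
      apply SIC.key1 A hA
      · have : (Φ F)^2 = Φ (F^2) := (map_pow Φ F 2).symm
        rw [this]
        exact SIC.phi_cw A N (F^2) h2
      · have : (Φ F)^3 = Φ (F^3) := (map_pow Φ F 3).symm
        rw [this]
        exact SIC.phi_cw A N (F^3) h3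
    intro s
    by_cases hs : s ∈ F.support
    · have hdig : ∀ s' : Fin r →₀ ℕ, s' ∈ F.support → ∀ i, s' i < N := by
        intro s' hs' i
        have h1 : (s'.sum fun _ e => e) ≤ F.totalDegree := MvPolynomial.le_totalDegree hs'
        have h2 : s' i ≤ s'.sum fun _ e => e := by
          by_cases hi : i ∈ s'.support
          · exact Finset.single_le_sum (fun _ _ => Nat.zero_le _) hi
          · rw [Finsupp.notMem_support_iff] at hi
            rw [hi]
            exact Nat.zero_le _
        omega
      have hinj : ∀ u ∈ F.support, ∀ t ∈ F.support, SIC.wgt N u = SIC.wgt N t → u = t := by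
        intro u hu t ht hw
        have := SIC.digits_inj (N := N) (by omega) r u t (hdig u hu) (hdig t ht) hw
        exact DFunLike.coe_injective this
      rw [← SIC.phi_extract N F hinj s hs]
      exact hcoeffs _
    · rw [MvPolynomial.notMem_support_iff] at hs
      rw [hs]
      exact A.zero_mem
  · intro hAX b hb2 hb3
    have key : ∀ c : B, c ∈ A → (MvPolynomial.C c : MvPolynomial (Fin r) B) ∈
        ((MvPolynomial.map (A.subtype) : MvPolynomial (Fin r) A →+* MvPolynomial (Fin r) B).range) := by
      intro c hc
      exact ⟨MvPolynomial.C ⟨c, hc⟩, MvPolynomial.map_C _ _⟩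
    have h2 : (MvPolynomial.C b : MvPolynomial (Fin r) B)^2 ∈ ((MvPolynomial.map (A.subtype) : MvPolynomial (Fin r) A →+* MvPolynomial (Fin r) B).range) := by
      rw [← map_pow]
      exact key _ hb2
    have h3 : (MvPolynomial.C b : MvPolynomial (Fin r) B)^3 ∈ ((MvPolynomial.map (A.subtype) : MvPolynomial (Fin r) A →+* MvPolynomial (Fin r) B).range) := by
      rw [← map_pow]
      exact key _ hb3
    obtain ⟨P, hP⟩ := hAX (MvPolynomial.C b) h2 h3
    have : b = (MvPolynomial.map (A.subtype) P).coeff 0 := by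
      rw [hP, MvPolynomial.coeff_zero_C]
    rw [this, MvPolynomial.coeff_map]
    exact (P.coeff 0).2
end
end

section
/- Let A ⊆ B be an extension of reduced commutative rings and M ⊆ N an extension of commutative cancellative torsion-free monoids. Then the subintegral closure of A[M] in B[N] equals (⁺A)[N ∩ sn(M)], where ⁺A is the subintegral closure of A in B, sn(M) is the subintegral closure of M in its group of fractions gp(M), and the intersection N ∩ sn(M) is taken inside gp(N). -/
open scoped Classical

noncomputable section

/-- The subintegral closure of `A` in an intermediate ring `C` (for `A ⊆ C ⊆ B`): the smallest
subring `T` of `B` containing `A` such that every `b ∈ C` with `b² ∈ T` and `b³ ∈ T` lies in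
`T`. -/
def Subring.subintegralClosureIn {B : Type*} [CommRing B] (A C : Subring B) : Subring B :=
  sInf {T : Subring B | A ≤ T ∧ ∀ b ∈ C, b ^ 2 ∈ T → b ^ 3 ∈ T → b ∈ T}

/-- The subintegral closure `⁺A` of `A` in `B`: the smallest subring `T` of `B` containing `A`
such that every `b : B` with `b² ∈ T` and `b³ ∈ T` lies in `T`. -/
def Subring.subintegralClosure {B : Type*} [CommRing B] (A : Subring B) : Subring B :=
  A.subintegralClosureIn ⊤

/-- The subintegral closure of `M` in an intermediate monoid `C` (for `M ⊆ C ⊆ G`): the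
smallest submonoid `T` of `G` containing `M` such that every `x ∈ C` with `x² ∈ T` and
`x³ ∈ T` lies in `T`. -/
def Submonoid.subintegralClosureIn {G : Type*} [CommMonoid G] (M C : Submonoid G) : Submonoid G :=
  sInf {T : Submonoid G | M ≤ T ∧ ∀ x ∈ C, x ^ 2 ∈ T → x ^ 3 ∈ T → x ∈ T}

namespace SubintegralProof

section CoeffSubring

variable {B : Type*} [CommRing B] {G : Type*} [CommMonoid G]

/-- The "coefficient-wise" description of `A[S]` inside `B[G]`. -/
def coeffSubring (A : Subring B) (S : Submonoid G) : Subring (MonoidAlgebra B G) where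
  carrier := {x | (∀ w, x.coeff w ∈ A) ∧ ∀ w ∈ x.coeff.support, w ∈ S}
  zero_mem' := ⟨fun w => by simp only [MonoidAlgebra.coeff_zero, Finsupp.coe_zero, Pi.zero_apply]; exact zero_mem A,
    by simp⟩
  one_mem' := by
    constructor
    · intro w
      rw [MonoidAlgebra.one_def]
      classical
      rw [MonoidAlgebra.coeff_single, Finsupp.single_apply]
      split
      · exact one_mem A
      · exact zero_mem A
    · intro w hw
      rw [MonoidAlgebra.one_def, MonoidAlgebra.coeff_single] at hw
      have := Finsupp.support_single_subset hw
      simp only [Finset.mem_singleton] at this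
      subst this
      exact one_mem S
  add_mem' := by
    rintro x y ⟨hx1, hx2⟩ ⟨hy1, hy2⟩
    constructor
    · intro w; rw [MonoidAlgebra.coeff_add, Finsupp.add_apply]; exact add_mem (hx1 w) (hy1 w)
    · intro w hw
      rw [MonoidAlgebra.coeff_add] at hw
      have := Finsupp.support_add hw
      rw [Finset.mem_union] at this
      rcases this with h | h
      · exact hx2 w h
      · exact hy2 w h
  neg_mem' := by
    rintro x ⟨hx1, hx2⟩
    constructor
    · intro w; rw [MonoidAlgebra.coeff_neg, Finsupp.neg_apply]; exact neg_mem (hx1 w)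
    · intro w hw
      rw [MonoidAlgebra.coeff_neg, Finsupp.support_neg] at hw
      exact hx2 w hw
  mul_mem' := by
    rintro x y ⟨hx1, hx2⟩ ⟨hy1, hy2⟩
    constructor
    · intro w
      classical
      rw [MonoidAlgebra.mul_apply]
      apply Subring.sum_mem
      intro a _
      apply Subring.sum_mem
      intro b _
      show (if a * b = w then x.coeff a * y.coeff b else 0) ∈ A
      split
      · exact mul_mem (hx1 a) (hy1 b)
      · exact zero_mem A
    · intro w hw
      classical
      have := MonoidAlgebra.support_coeff_mul_subset x y hw
      rw [Finset.mem_mul] at this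
      obtain ⟨a, ha, b, hb, rfl⟩ := this
      exact mul_mem (hx2 a ha) (hy2 b hb)

lemma mem_coeffSubring {A : Subring B} {S : Submonoid G} {x : MonoidAlgebra B G} :
    x ∈ coeffSubring A S ↔ (∀ w, x.coeff w ∈ A) ∧ ∀ w ∈ x.coeff.support, w ∈ S := Iff.rfl

lemma single_mem_coeffSubring {A : Subring B} {S : Submonoid G} {m : G} {a : B}
    (ha : a ∈ A) (hm : m ∈ S) : MonoidAlgebra.single m a ∈ coeffSubring A S := by
  constructor
  · intro w
    classical
    rw [MonoidAlgebra.coeff_single, Finsupp.single_apply]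
    split
    · exact ha
    · exact zero_mem A
  · intro w hw
    rw [MonoidAlgebra.coeff_single] at hw
    have := Finsupp.support_single_subset hw
    simp only [Finset.mem_singleton] at this
    subst this; exact hm

lemma monoidAlgebraSubring_eq_coeffSubring (A : Subring B) (S : Submonoid G) :
    monoidAlgebraSubring A S = coeffSubring A S := by
  apply le_antisymm
  · apply Subring.closure_le.2
    rintro x ⟨a, ha, m, hm, rfl⟩
    exact single_mem_coeffSubring ha hm
  · intro x hx
    rw [mem_coeffSubring] at hx
    have hrepr : x = ∑ w ∈ x.coeff.support, MonoidAlgebra.single w (x.coeff w) := by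
      exact (MonoidAlgebra.sum_coeff_single x).symm
    rw [hrepr]
    apply Subring.sum_mem
    intro w hw
    apply Subring.subset_closure
    exact ⟨x.coeff w, hx.1 w, w, hx.2 w hw, rfl⟩

lemma mem_monoidAlgebraSubring {A : Subring B} {S : Submonoid G} {x : MonoidAlgebra B G} :
    x ∈ monoidAlgebraSubring A S ↔ (∀ w, x.coeff w ∈ A) ∧ ∀ w ∈ x.coeff.support, w ∈ S := by
  rw [monoidAlgebraSubring_eq_coeffSubring]; rfl

end CoeffSubring

section ClosureLemmas

variable {B : Type*} [CommRing B]

lemma Subring.le_subintegralClosureIn (A C : Subring B) : A ≤ A.subintegralClosureIn C :=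
  le_sInf fun _ hT => hT.1

lemma Subring.subintegralClosureIn_one_step (A C : Subring B) :
    ∀ b ∈ C, b ^ 2 ∈ A.subintegralClosureIn C → b ^ 3 ∈ A.subintegralClosureIn C →
      b ∈ A.subintegralClosureIn C := by
  intro b hb h2 h3
  rw [Subring.subintegralClosureIn, Subring.mem_sInf]
  intro T hT
  exact hT.2 b hb (Subring.mem_sInf.1 h2 T hT) (Subring.mem_sInf.1 h3 T hT)

lemma Subring.subintegralClosureIn_le {A C T : Subring B} (h1 : A ≤ T)
    (h2 : ∀ b ∈ C, b ^ 2 ∈ T → b ^ 3 ∈ T → b ∈ T) : A.subintegralClosureIn C ≤ T :=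
  sInf_le ⟨h1, h2⟩

lemma Subring.le_subintegralClosure (A : Subring B) : A ≤ A.subintegralClosure :=
  Subring.le_subintegralClosureIn A ⊤

lemma Subring.subintegralClosure_one_step (A : Subring B) :
    ∀ b : B, b ^ 2 ∈ A.subintegralClosure → b ^ 3 ∈ A.subintegralClosure →
      b ∈ A.subintegralClosure := fun b =>
  Subring.subintegralClosureIn_one_step A ⊤ b trivial

lemma Submonoid.le_subintegralClosureIn {G : Type*} [CommMonoid G] (M C : Submonoid G) :
    M ≤ M.subintegralClosureIn C :=
  le_sInf fun _ hT => hT.1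

lemma Submonoid.subintegralClosureIn_one_step {G : Type*} [CommMonoid G] (M C : Submonoid G) :
    ∀ x ∈ C, x ^ 2 ∈ M.subintegralClosureIn C → x ^ 3 ∈ M.subintegralClosureIn C →
      x ∈ M.subintegralClosureIn C := by
  intro x hx h2 h3
  rw [Submonoid.subintegralClosureIn, Submonoid.mem_sInf]
  intro T hT
  exact hT.2 x hx (Submonoid.mem_sInf.1 h2 T hT) (Submonoid.mem_sInf.1 h3 T hT)

lemma Submonoid.subintegralClosureIn_le {G : Type*} [CommMonoid G] {M C T : Submonoid G}
    (h1 : M ≤ T) (h2 : ∀ x ∈ C, x ^ 2 ∈ T → x ^ 3 ∈ T → x ∈ T) :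
    M.subintegralClosureIn C ≤ T :=
  sInf_le ⟨h1, h2⟩

/-- In any subring, `b² ∈ T` and `b³ ∈ T` imply `bᵏ ∈ T` for all `k ≥ 2`. -/
lemma pow_mem_of_sq_cube {R : Type*} [CommRing R] {T : Subring R} {b : R}
    (h2 : b ^ 2 ∈ T) (h3 : b ^ 3 ∈ T) : ∀ k, 2 ≤ k → b ^ k ∈ T := by
  have key : ∀ k : ℕ, b ^ (k + 2) ∈ T ∧ b ^ (k + 3) ∈ T := by
    intro k
    induction k with
    | zero => exact ⟨h2, h3⟩
    | succ n ih =>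
      refine ⟨ih.2, ?_⟩
      have : b ^ (n + 1 + 3) = b ^ (n + 2) * b ^ 2 := by ring
      rw [this]
      exact mul_mem ih.1 h2
  intro k hk
  obtain ⟨j, rfl⟩ : ∃ j, k = j + 2 := ⟨k - 2, by omega⟩
  exact (key j).1

end ClosureLemmas

section MonoidSn

variable {G : Type*} [CommGroup G] (M : Submonoid G)

/-- The submonoid of elements of `gp(M)` all of whose large powers lie in `M`. -/
def powSub : Submonoid G where
  carrier := {x | x ∈ Subgroup.closure (M : Set G) ∧ ∃ n₀, ∀ n, n₀ ≤ n → x ^ n ∈ M}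
  one_mem' := ⟨one_mem _, 0, fun n _ => by rw [one_pow]; exact one_mem M⟩
  mul_mem' := by
    rintro x y ⟨hx, nx, hnx⟩ ⟨hy, ny, hny⟩
    refine ⟨mul_mem hx hy, max nx ny, fun n hn => ?_⟩
    rw [mul_pow]
    exact mul_mem (hnx n (le_trans (le_max_left _ _) hn))
      (hny n (le_trans (le_max_right _ _) hn))

lemma snM_le_powSub :
    M.subintegralClosureIn (Subgroup.closure (M : Set G)).toSubmonoid ≤ powSub M := by
  apply Submonoid.subintegralClosureIn_le
  · intro x hx
    exact ⟨Subgroup.subset_closure hx, 1, fun n _ => pow_mem hx n⟩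
  · rintro x hx ⟨_, n2, h2⟩ ⟨_, n3, h3⟩
    refine ⟨hx, 2 * n2 + 3 * n3 + 6, fun n hn => ?_⟩
    obtain ⟨a, b, ha, hb, hab⟩ : ∃ a b, n2 ≤ a ∧ n3 ≤ b ∧ n = 2 * a + 3 * b := by
      rcases Nat.even_or_odd (n - 3 * n3) with he | ho
      · obtain ⟨r, hr⟩ := he
        exact ⟨r, n3, by omega, le_refl _, by omega⟩
      · obtain ⟨r, hr⟩ := ho
        exact ⟨r - 1, n3 + 1, by omega, by omega, by omega⟩
    have hxn : x ^ n = (x ^ 2) ^ a * (x ^ 3) ^ b := by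
      rw [← pow_mul, ← pow_mul, ← pow_add, hab]
    rw [hxn]
    exact mul_mem (h2 a ha) (h3 b hb)

lemma snM_le_gpM :
    M.subintegralClosureIn (Subgroup.closure (M : Set G)).toSubmonoid ≤
      (Subgroup.closure (M : Set G)).toSubmonoid :=
  Submonoid.subintegralClosureIn_le (fun x hx => Subgroup.subset_closure hx)
    (fun x hx _ _ => hx)

lemma Mprime_one_step (N : Submonoid G) :
    ∀ x ∈ N,
      x ^ 2 ∈ N ⊓ M.subintegralClosureIn (Subgroup.closure (M : Set G)).toSubmonoid →
      x ^ 3 ∈ N ⊓ M.subintegralClosureIn (Subgroup.closure (M : Set G)).toSubmonoid →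
      x ∈ N ⊓ M.subintegralClosureIn (Subgroup.closure (M : Set G)).toSubmonoid := by
  intro x hx h2 h3
  have hx2 : x ^ 2 ∈ Subgroup.closure (M : Set G) := snM_le_gpM M h2.2
  have hx3 : x ^ 3 ∈ Subgroup.closure (M : Set G) := snM_le_gpM M h3.2
  have hxg : x ∈ Subgroup.closure (M : Set G) := by
    have hxid : x = x ^ 3 * (x ^ 2)⁻¹ := by group
    rw [hxid]
    exact mul_mem hx3 (inv_mem hx2)
  exact ⟨hx, Submonoid.subintegralClosureIn_one_step M _ x hxg h2.2 h3.2⟩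

end MonoidSn

section Descend

variable {R : Type*} [CommRing R]

/-- Downward induction: if all sufficiently large powers of `z ∈ C` lie in the subintegral
closure, then so does `z`. -/
lemma descend_pow (S C : Subring R) :
    ∀ (n₀ : ℕ) (z : R), z ∈ C → (∀ n, n₀ ≤ n → z ^ n ∈ S.subintegralClosureIn C) →
      z ∈ S.subintegralClosureIn C := by
  intro n₀
  induction n₀ with
  | zero => intro z _ h; simpa using h 1 (by omega)
  | succ m ih =>
    intro z hz h
    apply ih z hz
    intro n hn
    rcases Nat.lt_or_ge n (m + 1) with h' | h'
    · have hnm : n = m := by omega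
      subst hnm
      rcases Nat.eq_zero_or_pos n with h0 | h0
      · subst h0; simpa using one_mem (S.subintegralClosureIn C)
      · apply Subring.subintegralClosureIn_one_step S C _ (pow_mem hz n)
        · rw [← pow_mul]
          exact h (n * 2) (by omega)
        · rw [← pow_mul]
          exact h (n * 3) (by omega)
    · exact h n h'

end Descend

section EasyDirection

variable {B : Type*} [CommRing B] {G : Type*} [CommGroup G]
variable (A : Subring B) (M N : Submonoid G)

lemma single_one_mem_cl {α : B} (hα : α ∈ A.subintegralClosure) :
    MonoidAlgebra.single (1 : G) α ∈
      (monoidAlgebraSubring A M).subintegralClosureIn (monoidAlgebraSubring (⊤ : Subring B) N) := by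
  set cl := (monoidAlgebraSubring A M).subintegralClosureIn
      (monoidAlgebraSubring (⊤ : Subring B) N) with hcl
  let Abar : Subring B :=
    { carrier := {β | MonoidAlgebra.single (1 : G) β ∈ cl}
      zero_mem' := by
        show MonoidAlgebra.single (1 : G) (0 : B) ∈ cl
        rw [MonoidAlgebra.single_zero]
        exact zero_mem cl
      one_mem' := by
        show MonoidAlgebra.single (1 : G) (1 : B) ∈ cl
        rw [← MonoidAlgebra.one_def]
        exact one_mem cl
      add_mem' := by
        intro β γ hβ hγ
        show MonoidAlgebra.single (1 : G) (β + γ) ∈ cl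
        rw [MonoidAlgebra.single_add]
        exact add_mem hβ hγ
      neg_mem' := by
        intro β hβ
        show MonoidAlgebra.single (1 : G) (-β) ∈ cl
        have hneg : MonoidAlgebra.single (1 : G) (-β) = -MonoidAlgebra.single (1 : G) β :=
          MonoidAlgebra.single_neg (1 : G) β
        rw [hneg]
        exact neg_mem hβ
      mul_mem' := by
        intro β γ hβ hγ
        show MonoidAlgebra.single (1 : G) (β * γ) ∈ cl
        have : MonoidAlgebra.single (1 : G) (β * γ) =
            MonoidAlgebra.single (1 : G) β * MonoidAlgebra.single (1 : G) γ := by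
          rw [MonoidAlgebra.single_mul_single, one_mul]
        rw [this]
        exact mul_mem hβ hγ }
  have hle : A.subintegralClosure ≤ Abar := by
    apply Subring.subintegralClosureIn_le
    · intro a ha
      show MonoidAlgebra.single (1 : G) a ∈ cl
      exact Subring.le_subintegralClosureIn _ _
        (Subring.subset_closure ⟨a, ha, 1, one_mem M, rfl⟩)
    · intro b _ h2 h3
      show MonoidAlgebra.single (1 : G) b ∈ cl
      have hsq : MonoidAlgebra.single (1 : G) b ^ 2 = MonoidAlgebra.single (1 : G) (b ^ 2) := by
        rw [MonoidAlgebra.single_pow, one_pow]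
      have hcb : MonoidAlgebra.single (1 : G) b ^ 3 = MonoidAlgebra.single (1 : G) (b ^ 3) := by
        rw [MonoidAlgebra.single_pow, one_pow]
      apply Subring.subintegralClosureIn_one_step
      · rw [mem_monoidAlgebraSubring]
        refine ⟨fun w => trivial, fun w hw => ?_⟩
        have := Finsupp.support_single_subset hw
        simp only [Finset.mem_singleton] at this
        subst this; exact one_mem N
      · rw [hsq]; exact h2
      · rw [hcb]; exact h3
  exact hle hα

lemma single_mem_cl_of_sn (hMN : M ≤ N) {m : G}
    (hm : m ∈ N ⊓ M.subintegralClosureIn (Subgroup.closure (M : Set G)).toSubmonoid) :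
    MonoidAlgebra.single m (1 : B) ∈
      (monoidAlgebraSubring A M).subintegralClosureIn (monoidAlgebraSubring (⊤ : Subring B) N) := by
  obtain ⟨hmN, hmsn⟩ := hm
  obtain ⟨-, n₀, hpow⟩ := snM_le_powSub M hmsn
  apply descend_pow _ _ n₀
  · rw [mem_monoidAlgebraSubring]
    refine ⟨fun w => trivial, fun w hw => ?_⟩
    have := Finsupp.support_single_subset hw
    simp only [Finset.mem_singleton] at this
    subst this; exact hmN
  · intro n hn
    have : (MonoidAlgebra.single m (1 : B)) ^ n = MonoidAlgebra.single (m ^ n) (1 : B) := by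
      rw [MonoidAlgebra.single_pow, one_pow]
    rw [this]
    exact Subring.le_subintegralClosureIn _ _
      (Subring.subset_closure ⟨1, one_mem A, m ^ n, hpow n hn, rfl⟩)

lemma target_le_cl (hMN : M ≤ N) :
    monoidAlgebraSubring A.subintegralClosure
        (N ⊓ M.subintegralClosureIn (Subgroup.closure (M : Set G)).toSubmonoid) ≤
      (monoidAlgebraSubring A M).subintegralClosureIn (monoidAlgebraSubring (⊤ : Subring B) N) := by
  apply Subring.closure_le.2
  rintro x ⟨α, hα, m, hm, rfl⟩
  have : MonoidAlgebra.single m α =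
      MonoidAlgebra.single (1 : G) α * MonoidAlgebra.single m (1 : B) := by
    rw [MonoidAlgebra.single_mul_single, one_mul, mul_one]
  rw [this]
  exact mul_mem (single_one_mem_cl A M N hα) (single_mem_cl_of_sn A M N hMN hm)

lemma base_le_target (hMN : M ≤ N) :
    monoidAlgebraSubring A M ≤
      monoidAlgebraSubring A.subintegralClosure
        (N ⊓ M.subintegralClosureIn (Subgroup.closure (M : Set G)).toSubmonoid) := by
  apply Subring.closure_le.2
  rintro x ⟨a, ha, m, hm, rfl⟩
  exact Subring.subset_closure
    ⟨a, Subring.le_subintegralClosure A ha, m,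
      ⟨hMN hm, Submonoid.le_subintegralClosureIn M _ hm⟩, rfl⟩

end EasyDirection

section Phi

variable {G : Type*} [CommGroup G]

lemma digits_zero : ∀ (r : ℕ) (K : ℤ), 0 < K → ∀ v : Fin r → ℤ, (∀ i, |v i| < K) →
    (∑ i, v i * K ^ (i : ℕ)) = 0 → ∀ i, v i = 0 := by
  intro r
  induction r with
  | zero => intro K _ v _ _ i; exact Fin.elim0 i
  | succ n ih =>
    intro K hK v hv hsum
    have hrw : (∑ i : Fin (n + 1), v i * K ^ (i : ℕ)) =
        v 0 + (∑ i : Fin n, v i.succ * K ^ (i : ℕ)) * K := by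
      rw [Fin.sum_univ_succ]
      simp only [Fin.val_zero, pow_zero, mul_one, Fin.val_succ]
      rw [Finset.sum_mul]
      congr 1
      apply Finset.sum_congr rfl
      intro i _
      rw [pow_succ]
      ring
    rw [hrw] at hsum
    have h0 : v 0 = 0 := by
      apply Int.eq_zero_of_abs_lt_dvd _ (hv 0)
      exact ⟨-(∑ i : Fin n, v i.succ * K ^ (i : ℕ)), by linarith⟩
    have hsum2 : (∑ i : Fin n, v i.succ * K ^ (i : ℕ)) = 0 := by
      have : (∑ i : Fin n, v i.succ * K ^ (i : ℕ)) * K = 0 := by linarith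
      rcases mul_eq_zero.1 this with h | h
      · exact h
      · omega
    have hrec := ih K hK (fun i => v i.succ) (fun i => hv i.succ) hsum2
    intro i
    rcases Fin.eq_zero_or_eq_succ i with rfl | ⟨j, rfl⟩
    · exact h0
    · exact hrec j

lemma nzsd_of_torsionfree (htf : MulTorsionFree G) : NoZeroSMulDivisors ℤ (Additive G) := by
  constructor
  intro n x h
  rcases eq_or_ne n 0 with rfl | hn
  · exact Or.inl rfl
  · right
    have hnat : (n.natAbs) • x = 0 := by
      rcases Int.natAbs_eq n with he | he
      · rw [he, natCast_zsmul] at h; exact h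
      · rw [he, neg_zsmul] at h
        have := neg_eq_zero.1 h
        rwa [natCast_zsmul] at this
    have hpow : (Additive.toMul x) ^ n.natAbs = 1 ^ n.natAbs := by
      rw [one_pow]
      have : Additive.toMul ((n.natAbs) • x) = (Additive.toMul x) ^ n.natAbs := by
        simp
      rw [← this, hnat]
      rfl
    have := htf (Additive.toMul x) 1 n.natAbs (Int.natAbs_ne_zero.2 hn) hpow
    have : x = Additive.ofMul (1 : G) := by
      rw [← this]; rfl
    simpa using this

lemma exists_functional {M : Type*} [AddCommGroup M] [Module ℤ M] [Module.Finite ℤ M]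
    [Module.Free ℤ M] [NoZeroSMulDivisors ℤ M] (T : Finset M) :
    ∃ ψ : M →ₗ[ℤ] ℤ, ∀ x ∈ T, ∀ y ∈ T, ψ x = ψ y → x = y := by
  classical
  let b := Module.Free.chooseBasis ℤ M
  let e := Fintype.equivFin (Module.Free.ChooseBasisIndex ℤ M)
  let r := Fintype.card (Module.Free.ChooseBasisIndex ℤ M)
  let c0 : ℤ := ∑ x ∈ T, ∑ i, |b.repr x i|
  have hc0 : 0 ≤ c0 := Finset.sum_nonneg fun x _ =>
    Finset.sum_nonneg fun i _ => abs_nonneg _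
  have hbound : ∀ x ∈ T, ∀ i, |b.repr x i| ≤ c0 := by
    intro x hx i
    have h1 : |b.repr x i| ≤ ∑ j, |b.repr x j| :=
      Finset.single_le_sum (f := fun j => |b.repr x j|)
        (fun j _ => abs_nonneg _) (Finset.mem_univ i)
    have h2 : (∑ j, |b.repr x j|) ≤ c0 :=
      Finset.single_le_sum (f := fun y => ∑ i, |b.repr y i|)
        (fun y _ => Finset.sum_nonneg fun j _ => abs_nonneg _) hx
    omega
  let K : ℤ := 2 * c0 + 1
  have hKpos : 0 < K := by simp only [K]; omega
  refine ⟨∑ j : Fin r, K ^ (j : ℕ) • (b.coord (e.symm j)), ?_⟩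
  have hψ : ∀ z, (∑ j : Fin r, K ^ (j : ℕ) • (b.coord (e.symm j))) z
      = ∑ j : Fin r, (b.repr z) (e.symm j) * K ^ (j : ℕ) := by
    intro z
    rw [LinearMap.sum_apply]
    apply Finset.sum_congr rfl
    intro j _
    rw [LinearMap.smul_apply, Module.Basis.coord_apply, smul_eq_mul, mul_comm]
  intro x hx y hy hxy
  rw [hψ, hψ] at hxy
  have hvsum : (∑ j : Fin r, ((b.repr x) (e.symm j) - (b.repr y) (e.symm j)) * K ^ (j : ℕ)) = 0 := by
    simp only [sub_mul]
    rw [Finset.sum_sub_distrib]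
    omega
  have hvbound : ∀ j : Fin r, |(b.repr x) (e.symm j) - (b.repr y) (e.symm j)| < K := by
    intro j
    have h1 := hbound x hx (e.symm j)
    have h2 := hbound y hy (e.symm j)
    have h3 := abs_sub ((b.repr x) (e.symm j)) ((b.repr y) (e.symm j))
    simp only [K]
    omega
  have hvz := digits_zero r K hKpos _ hvbound hvsum
  have hrepr : b.repr x = b.repr y := by
    apply Finsupp.ext
    intro i
    have := hvz (e i)
    simp only [Equiv.symm_apply_apply] at this
    omega
  exact b.repr.injective hrepr

/-- For any finite subset `S` of a torsion-free abelian group there is a submonoid `H ⊇ S`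
and a function `φ : G → ℤ` which is additive on `H` and injective on `S`. -/
lemma exists_phi (htf : MulTorsionFree G) (S : Finset G) :
    ∃ (H : Submonoid G) (φ : G → ℤ),
      (∀ x ∈ S, x ∈ H) ∧
      (∀ x ∈ H, ∀ y ∈ H, φ (x * y) = φ x + φ y) ∧
      (∀ x ∈ S, ∀ y ∈ S, φ x = φ y → x = y) := by
  haveI := nzsd_of_torsionfree htf
  set P : Submodule ℤ (Additive G) :=
    Submodule.span ℤ ((fun g => Additive.ofMul g) '' (S : Set G)) with hP
  haveI : Module.Finite ℤ P :=
    Module.Finite.span_of_finite ℤ ((S.finite_toSet).image _)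
  haveI : Module.Free ℤ P := Module.free_of_finite_type_torsion_free'
  have hSP : ∀ x ∈ S, Additive.ofMul x ∈ P := by
    intro x hx
    exact Submodule.subset_span ⟨x, hx, rfl⟩
  let T : Finset P := (S.attach).image (fun x => (⟨Additive.ofMul x.1, hSP x.1 x.2⟩ : P))
  haveI : NoZeroSMulDivisors ℤ P := Function.Injective.noZeroSMulDivisors (fun x : P => (x : Additive G))
    Subtype.coe_injective rfl (fun _ _ => rfl)
  obtain ⟨ψ, hψ⟩ := exists_functional T
  refine ⟨{ carrier := {x | Additive.ofMul x ∈ P}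
            one_mem' := by
              show Additive.ofMul (1 : G) ∈ P
              have h1 : Additive.ofMul (1 : G) = (0 : Additive G) := rfl
              rw [h1]; exact zero_mem P
            mul_mem' := by
              intro x y hx hy
              show Additive.ofMul (x * y) ∈ P
              have h1 : Additive.ofMul (x * y) = Additive.ofMul x + Additive.ofMul y := rfl
              rw [h1]; exact add_mem hx hy },
    fun x => if h : Additive.ofMul x ∈ P then ψ ⟨_, h⟩ else 0, ?_, ?_, ?_⟩
  · intro x hx; exact hSP x hx
  · intro x hx y hy
    have hxmem : Additive.ofMul x ∈ P := hx
    have hymem : Additive.ofMul y ∈ P := hy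
    have hxy : Additive.ofMul (x * y) ∈ P := by
      have h1 : Additive.ofMul (x * y) = Additive.ofMul x + Additive.ofMul y := rfl
      rw [h1]; exact add_mem hxmem hymem
    dsimp only
    rw [dif_pos hxy, dif_pos hxmem, dif_pos hymem]
    have hsplit : (⟨Additive.ofMul (x * y), hxy⟩ : P) =
        ⟨Additive.ofMul x, hxmem⟩ + ⟨Additive.ofMul y, hymem⟩ := by
      apply Subtype.ext; rfl
    rw [hsplit, map_add]
  · intro x hx y hy hxyeq
    dsimp only at hxyeq
    rw [dif_pos (hSP x hx), dif_pos (hSP y hy)] at hxyeq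
    have hmx : (⟨Additive.ofMul x, hSP x hx⟩ : P) ∈ T :=
      Finset.mem_image.2 ⟨⟨x, hx⟩, Finset.mem_attach _ _, rfl⟩
    have hmy : (⟨Additive.ofMul y, hSP y hy⟩ : P) ∈ T :=
      Finset.mem_image.2 ⟨⟨y, hy⟩, Finset.mem_attach _ _, rfl⟩
    have := hψ _ hmx _ hmy hxyeq
    have h2 : Additive.ofMul x = Additive.ofMul y := by
      rw [Subtype.ext_iff] at this
      exact this
    exact Additive.ofMul.injective h2

end Phi

section Magic

variable {R : Type*} [CommRing R]

/-- The key algebraic identity: `u·h^(m+2)` is congruent, modulo the subring generated by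
`(h+u)^k (k ≥ 2)` and `h`, to an explicit "defect" term built from high powers of `u`. -/
lemma magic_identity (h u : R) (m : ℕ) :
    u * h ^ (m + 2) =
      (h + u) ^ 2 *
          (∑ J ∈ Finset.range m, (-1 : R) ^ J * ((J + 1 : ℕ) : R) * u ^ (J + 1) * h ^ (m - J)) +
        (-1 : R) ^ m * u ^ (m + 1) * (((m + 1 : ℕ) : R) * h ^ 2 + ((m : ℕ) : R) * u * h) := by
  induction m with
  | zero =>
    simp only [Finset.range_zero, Finset.sum_empty, mul_zero, zero_add, pow_zero, one_mul,
      Nat.cast_one, Nat.cast_zero, zero_mul, add_zero, pow_one, Nat.zero_add]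
  | succ m ih =>
    have hstep : (∑ J ∈ Finset.range (m + 1),
          (-1 : R) ^ J * ((J + 1 : ℕ) : R) * u ^ (J + 1) * h ^ (m + 1 - J)) =
        h * (∑ J ∈ Finset.range m, (-1 : R) ^ J * ((J + 1 : ℕ) : R) * u ^ (J + 1) * h ^ (m - J)) +
          (-1 : R) ^ m * ((m + 1 : ℕ) : R) * u ^ (m + 1) * h := by
      rw [Finset.sum_range_succ, Finset.mul_sum]
      congr 1
      · apply Finset.sum_congr rfl
        intro J hJ
        rw [Finset.mem_range] at hJ
        have hJm : m + 1 - J = (m - J) + 1 := by omega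
        rw [hJm, pow_succ]
        ring
      · have hmm : m + 1 - m = 1 := by omega
        rw [hmm, pow_one]
    rw [hstep]
    have expand : (h + u) ^ 2 *
        (h * (∑ J ∈ Finset.range m, (-1 : R) ^ J * ((J + 1 : ℕ) : R) * u ^ (J + 1) * h ^ (m - J)) +
          (-1 : R) ^ m * ((m + 1 : ℕ) : R) * u ^ (m + 1) * h) =
        h * ((h + u) ^ 2 *
            (∑ J ∈ Finset.range m, (-1 : R) ^ J * ((J + 1 : ℕ) : R) * u ^ (J + 1) * h ^ (m - J))) +
          (h + u) ^ 2 * ((-1 : R) ^ m * ((m + 1 : ℕ) : R) * u ^ (m + 1) * h) := by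
      ring
    rw [expand]
    have ih' : h * ((h + u) ^ 2 *
        (∑ J ∈ Finset.range m, (-1 : R) ^ J * ((J + 1 : ℕ) : R) * u ^ (J + 1) * h ^ (m - J))) =
        h * (u * h ^ (m + 2)) - h * ((-1 : R) ^ m * u ^ (m + 1) *
          (((m + 1 : ℕ) : R) * h ^ 2 + ((m : ℕ) : R) * u * h)) := by
      rw [← mul_sub]
      congr 1
      rw [ih]
      ring
    rw [ih']
    push_cast
    ring

end Magic

section MainLemma

variable {B : Type*} [CommRing B] {G : Type*} [CommGroup G]

/-- All powers `f^k u^j` with `k ≥ 2` lie in any subring containing `f²`, `f³` and `h`,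
where `u = f - h`. -/
lemma fpow_mul_upow_mem {T : Subring (MonoidAlgebra B G)} {f h : MonoidAlgebra B G}
    (hf2 : f ^ 2 ∈ T) (hf3 : f ^ 3 ∈ T) (hh : h ∈ T) :
    ∀ (j k : ℕ), 2 ≤ k → f ^ k * (f - h) ^ j ∈ T := by
  intro j
  induction j with
  | zero =>
    intro k hk
    simpa using pow_mem_of_sq_cube hf2 hf3 k hk
  | succ j ihj =>
    intro k hk
    have hid : f ^ k * (f - h) ^ (j + 1) =
        f ^ (k + 1) * (f - h) ^ j - (f ^ k * (f - h) ^ j) * h := by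
      ring
    rw [hid]
    exact sub_mem (ihj (k + 1) (by omega)) (mul_mem (ihj k hk) hh)

end MainLemma

section Bounds

variable {B : Type*} [CommRing B] {G : Type*} [CommGroup G]
variable {H : Submonoid G} {φ : G → ℤ}

/-- Support bound: all exponents of `z` lie in `H` with `φ`-value at most `c`. -/
def Bnd (H : Submonoid G) (φ : G → ℤ) (z : MonoidAlgebra B G) (c : ℤ) : Prop :=
  ∀ a ∈ z.coeff.support, a ∈ H ∧ φ a ≤ c

lemma phi_one (hφadd : ∀ x ∈ H, ∀ y ∈ H, φ (x * y) = φ x + φ y) : φ (1 : G) = 0 := by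
  have := hφadd 1 (one_mem H) 1 (one_mem H)
  rw [one_mul] at this
  omega

lemma phi_pow (hφadd : ∀ x ∈ H, ∀ y ∈ H, φ (x * y) = φ x + φ y) {g : G} (hg : g ∈ H) :
    ∀ k : ℕ, φ (g ^ k) = k * φ g := by
  intro k
  induction k with
  | zero => rw [pow_zero, phi_one hφadd]; simp
  | succ k ihk =>
    rw [pow_succ, hφadd _ (pow_mem hg k) _ hg, ihk]
    push_cast; ring

lemma Bnd.mono {z : MonoidAlgebra B G} {c c' : ℤ} (h : c ≤ c') (hz : Bnd H φ z c) :
    Bnd H φ z c' := fun a ha => ⟨(hz a ha).1, le_trans (hz a ha).2 h⟩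

lemma Bnd.mul (hφadd : ∀ x ∈ H, ∀ y ∈ H, φ (x * y) = φ x + φ y)
    {z w : MonoidAlgebra B G} {c d : ℤ} (hz : Bnd H φ z c) (hw : Bnd H φ w d) :
    Bnd H φ (z * w) (c + d) := by
  intro a ha
  classical
  have := MonoidAlgebra.support_coeff_mul_subset z w ha
  rw [Finset.mem_mul] at this
  obtain ⟨u, hu, v, hv, rfl⟩ := this
  obtain ⟨hu1, hu2⟩ := hz u hu
  obtain ⟨hv1, hv2⟩ := hw v hv
  refine ⟨mul_mem hu1 hv1, ?_⟩
  rw [hφadd u hu1 v hv1]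
  omega

lemma Bnd.add {z w : MonoidAlgebra B G} {c : ℤ} (hz : Bnd H φ z c) (hw : Bnd H φ w c) :
    Bnd H φ (z + w) c := by
  intro a ha
  rw [MonoidAlgebra.coeff_add] at ha
  have := Finsupp.support_add ha
  rw [Finset.mem_union] at this
  rcases this with h | h
  · exact hz a h
  · exact hw a h

lemma Bnd.neg {z : MonoidAlgebra B G} {c : ℤ} (hz : Bnd H φ z c) : Bnd H φ (-z) c := by
  intro a ha
  rw [MonoidAlgebra.coeff_neg, Finsupp.support_neg] at ha
  exact hz a ha

lemma Bnd.single {γ : G} (hγ : γ ∈ H) (β : B) :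
    Bnd H φ (MonoidAlgebra.single γ β) (φ γ) := by
  intro a ha
  rw [MonoidAlgebra.coeff_single] at ha
  have := Finsupp.support_single_subset ha
  simp only [Finset.mem_singleton] at this
  subst this
  exact ⟨hγ, le_refl _⟩

lemma Bnd.one (hφadd : ∀ x ∈ H, ∀ y ∈ H, φ (x * y) = φ x + φ y) :
    Bnd H φ (1 : MonoidAlgebra B G) 0 := by
  have h := Bnd.single (φ := φ) (one_mem H) (1 : B)
  rw [← MonoidAlgebra.one_def] at h
  rw [phi_one hφadd] at h
  exact h

lemma Bnd.pow (hφadd : ∀ x ∈ H, ∀ y ∈ H, φ (x * y) = φ x + φ y)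
    {z : MonoidAlgebra B G} {c : ℤ} (hz : Bnd H φ z c) :
    ∀ k : ℕ, 1 ≤ k → Bnd H φ (z ^ k) (k * c) := by
  intro k
  induction k with
  | zero => omega
  | succ k ihk =>
    intro _
    rcases Nat.eq_zero_or_pos k with rfl | hk
    · simpa using hz
    · have h1 := Bnd.mul hφadd (ihk hk) hz
      rw [← pow_succ] at h1
      apply Bnd.mono _ h1
      push_cast; ring_nf; omega

lemma Bnd.natCast (hφadd : ∀ x ∈ H, ∀ y ∈ H, φ (x * y) = φ x + φ y) (n : ℕ) :
    Bnd H φ ((n : MonoidAlgebra B G)) 0 := by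
  induction n with
  | zero => intro a ha; simp at ha
  | succ n ihn =>
    have := Bnd.add ihn (Bnd.one (B := B) hφadd)
    rwa [show ((n : MonoidAlgebra B G) + 1) = ((n + 1 : ℕ) : MonoidAlgebra B G) by push_cast; ring]
      at this

lemma Bnd.negOnePow (hφadd : ∀ x ∈ H, ∀ y ∈ H, φ (x * y) = φ x + φ y) (m : ℕ) :
    Bnd H φ ((-1 : MonoidAlgebra B G) ^ m) 0 := by
  rcases Nat.even_or_odd m with he | ho
  · rw [he.neg_one_pow]; exact Bnd.one hφadd
  · rw [ho.neg_one_pow]; exact Bnd.neg (Bnd.one hφadd)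

end Bounds

section Main

variable {B : Type*} [CommRing B] [IsReduced B] {G : Type*} [CommGroup G]

theorem main_lemma (htf : MulTorsionFree G) (A' : Subring B)
    (hA' : ∀ b : B, b ^ 2 ∈ A' → b ^ 3 ∈ A' → b ∈ A')
    (N M' : Submonoid G)
    (hM' : ∀ x ∈ N, x ^ 2 ∈ M' → x ^ 3 ∈ M' → x ∈ M') :
    ∀ (n : ℕ) (f : MonoidAlgebra B G), f.coeff.support.card ≤ n →
      (∀ a ∈ f.coeff.support, a ∈ N) →
      f ^ 2 ∈ coeffSubring A' M' → f ^ 3 ∈ coeffSubring A' M' →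
      f ∈ coeffSubring A' M' := by
  intro n
  induction n with
  | zero =>
    intro f hcard _ _ _
    have hf0 : f = 0 := by
      have h1 : f.coeff.support = ∅ := Finset.card_eq_zero.1 (Nat.le_zero.1 hcard)
      exact MonoidAlgebra.coeff_eq_zero.1 (Finsupp.support_eq_empty.1 h1)
    rw [hf0]; exact zero_mem _
  | succ n ih =>
    intro f hcard hfN hf2 hf3
    by_cases hf0 : f = 0
    · rw [hf0]; exact zero_mem _
    obtain ⟨H, φ, hSH, hφadd, hφinj⟩ := exists_phi htf f.coeff.support
    obtain ⟨g, hg, hgmax⟩ := f.coeff.support.exists_max_image φ (Finsupp.support_nonempty_iff.2 (mt MonoidAlgebra.coeff_eq_zero.1 hf0))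
    set c : B := f.coeff g with hc
    have hcne : c ≠ 0 := Finsupp.mem_support_iff.1 hg
    have hgH : g ∈ H := hSH g hg
    have hstrict : ∀ a ∈ f.coeff.support, a ≠ g → φ a < φ g := by
      intro a ha hne
      rcases lt_or_eq_of_le (hgmax a ha) with h | h
      · exact h
      · exact absurd (hφinj a ha g hg h) hne
    have hBf : Bnd H φ f (φ g) := fun a ha => ⟨hSH a ha, hgmax a ha⟩
    -- top coefficient extraction for the square
    have htop2 : (f * f).coeff (g * g) = c * c := by
      rw [MonoidAlgebra.mul_apply_left]
      show (∑ a ∈ f.coeff.support, f.coeff a * f.coeff (a⁻¹ * (g * g))) = c * c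
      have hsum : (∑ a ∈ f.coeff.support, f.coeff a * f.coeff (a⁻¹ * (g * g))) = f.coeff g * f.coeff (g⁻¹ * (g * g)) := by
        apply Finset.sum_eq_single g
        · intro a ha hne
          have hz : f.coeff (a⁻¹ * (g * g)) = 0 := by
            by_contra hnz
            have hmem : a⁻¹ * (g * g) ∈ f.coeff.support := Finsupp.mem_support_iff.2 hnz
            have h1 : φ (a * (a⁻¹ * (g * g))) = φ a + φ (a⁻¹ * (g * g)) :=
              hφadd a (hSH a ha) _ (hSH _ hmem)
            rw [show a * (a⁻¹ * (g * g)) = g * g by group] at h1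
            have h2 : φ (g * g) = φ g + φ g := hφadd g hgH g hgH
            have h3 := hgmax _ hmem
            have h4 := hstrict a ha hne
            omega
          rw [hz, mul_zero]
        · intro hng; exact absurd hg hng
      rw [hsum, show g⁻¹ * (g * g) = g by group, ← hc]
    -- top coefficient extraction for the cube
    have htop3 : (f * (f * f)).coeff (g * (g * g)) = c * (c * c) := by
      have hBff : Bnd H φ (f * f) (φ g + φ g) := Bnd.mul hφadd hBf hBf
      rw [MonoidAlgebra.mul_apply_left]
      show (∑ a ∈ f.coeff.support, f.coeff a * (f * f).coeff (a⁻¹ * (g * (g * g)))) = c * (c * c)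
      have hsum : (∑ a ∈ f.coeff.support, f.coeff a * (f * f).coeff (a⁻¹ * (g * (g * g)))) =
          f.coeff g * (f * f).coeff (g⁻¹ * (g * (g * g))) := by
        apply Finset.sum_eq_single g
        · intro a ha hne
          have hz : (f * f).coeff (a⁻¹ * (g * (g * g))) = 0 := by
            by_contra hnz
            have hmem : a⁻¹ * (g * (g * g)) ∈ (f * f).coeff.support := Finsupp.mem_support_iff.2 hnz
            obtain ⟨hmH, hmb⟩ := hBff _ hmem
            have h1 : φ (a * (a⁻¹ * (g * (g * g)))) = φ a + φ (a⁻¹ * (g * (g * g))) :=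
              hφadd a (hSH a ha) _ hmH
            rw [show a * (a⁻¹ * (g * (g * g))) = g * (g * g) by group] at h1
            have h2 : φ (g * (g * g)) = φ g + φ (g * g) := hφadd g hgH _ (mul_mem hgH hgH)
            have h2' : φ (g * g) = φ g + φ g := hφadd g hgH g hgH
            have h4 := hstrict a ha hne
            omega
          rw [hz, mul_zero]
        · intro hng; exact absurd hg hng
      rw [hsum, show g⁻¹ * (g * (g * g)) = g * g by group, htop2, ← hc]
    -- coefficient and exponent facts for the top term
    have hf2' := (mem_coeffSubring.1 hf2)
    have hf3' := (mem_coeffSubring.1 hf3)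
    have hccA : c * c ∈ A' := by
      have h1 := hf2'.1 (g * g)
      rw [pow_two, htop2] at h1
      exact h1
    have hcccA : c * (c * c) ∈ A' := by
      have h1 := hf3'.1 (g * (g * g))
      rw [show f ^ 3 = f * (f * f) by ring, htop3] at h1
      exact h1
    have hcA : c ∈ A' := by
      apply hA' c
      · rw [pow_two]; exact hccA
      · rw [show c ^ 3 = c * (c * c) by ring]; exact hcccA
    have hccne : c * c ≠ 0 := by
      intro h
      exact hcne (IsReduced.eq_zero c ⟨2, by rw [pow_two]; exact h⟩)
    have hcccne : c * (c * c) ≠ 0 := by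
      intro h
      exact hcne (IsReduced.eq_zero c ⟨3, by rw [show c ^ 3 = c * (c * c) by ring]; exact h⟩)
    have hgM : g ∈ M' := by
      have h2 : g * g ∈ M' := by
        apply hf2'.2
        rw [Finsupp.mem_support_iff, pow_two, htop2]
        exact hccne
      have h3 : g * (g * g) ∈ M' := by
        apply hf3'.2
        rw [Finsupp.mem_support_iff, show f ^ 3 = f * (f * f) by ring, htop3]
        exact hcccne
      apply hM' g (hfN g hg)
      · rw [pow_two]; exact h2
      · rw [show g ^ 3 = g * (g * g) by rw [pow_succ, pow_two, mul_assoc]]; exact h3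
    -- the top monomial
    have hhTT : MonoidAlgebra.single g c ∈ coeffSubring A' M' := single_mem_coeffSubring hcA hgM
    set u : MonoidAlgebra B G := f - MonoidAlgebra.single g c with hu
    have hsuppu : u.coeff.support ⊆ f.coeff.support.erase g := by
      intro w hw
      rw [Finsupp.mem_support_iff] at hw
      have hval : u.coeff w = f.coeff w - (MonoidAlgebra.single g c).coeff w := by rw [hu, MonoidAlgebra.coeff_sub, Finsupp.sub_apply]
      by_cases hwg : w = g
      · exfalso
        apply hw
        rw [hval, hwg]
        classical
        rw [MonoidAlgebra.coeff_single, Finsupp.single_apply, if_pos rfl, ← hc, sub_self]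
      · rw [Finset.mem_erase]
        refine ⟨hwg, ?_⟩
        rw [Finsupp.mem_support_iff]
        intro hfw
        apply hw
        rw [hval, hfw]
        classical
        rw [MonoidAlgebra.coeff_single, Finsupp.single_apply, if_neg (fun h => hwg h.symm), sub_zero]
    have huval : ∀ a, a ≠ g → u.coeff a = f.coeff a := by
      intro a hag
      rw [hu, MonoidAlgebra.coeff_sub, Finsupp.sub_apply]
      classical
      rw [MonoidAlgebra.coeff_single, Finsupp.single_apply, if_neg (fun h => hag h.symm), sub_zero]
    have hBu : Bnd H φ u (φ g - 1) := by
      intro a ha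
      have h1 := hsuppu ha
      rw [Finset.mem_erase] at h1
      have h2 := hstrict a h1.2 h1.1
      exact ⟨hSH a h1.2, by omega⟩
    have hKL : ∀ (j k : ℕ), 2 ≤ k → f ^ k * u ^ j ∈ coeffSubring A' M' := by
      intro j k hk
      rw [hu]
      exact fpow_mul_upow_mem hf2 hf3 hhTT j k hk
    -- the exponent padding
    set m₀ : ℕ := f.coeff.support.sup (fun a => (φ g - φ a).toNat) with hm₀def
    have hm₀ : ∀ a ∈ f.coeff.support, φ g - φ a ≤ (m₀ : ℤ) := by
      intro a ha
      have h1 : (φ g - φ a) ≤ ((φ g - φ a).toNat : ℤ) := Int.self_le_toNat _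
      have h2 : ((φ g - φ a).toNat : ℤ) ≤ (m₀ : ℤ) := by
        exact_mod_cast Finset.le_sup (f := fun a => (φ g - φ a).toNat) ha
      omega
    set Pm : MonoidAlgebra B G := ∑ J ∈ Finset.range m₀,
      (-1 : MonoidAlgebra B G) ^ J * ((J + 1 : ℕ) : MonoidAlgebra B G) * u ^ (J + 1) *
        (MonoidAlgebra.single g c) ^ (m₀ - J) with hPm
    set W : MonoidAlgebra B G := f ^ 2 * Pm with hW
    set D : MonoidAlgebra B G := (-1 : MonoidAlgebra B G) ^ m₀ * u ^ (m₀ + 1) *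
      (((m₀ + 1 : ℕ) : MonoidAlgebra B G) * (MonoidAlgebra.single g c) ^ 2 +
        ((m₀ : ℕ) : MonoidAlgebra B G) * u * (MonoidAlgebra.single g c)) with hD
    have hWTT : W ∈ coeffSubring A' M' := by
      rw [hW, hPm, Finset.mul_sum]
      apply Subring.sum_mem
      intro J _
      have hid : f ^ 2 * ((-1 : MonoidAlgebra B G) ^ J * ((J + 1 : ℕ) : MonoidAlgebra B G) *
          u ^ (J + 1) * (MonoidAlgebra.single g c) ^ (m₀ - J)) =
          (-1 : MonoidAlgebra B G) ^ J * ((J + 1 : ℕ) : MonoidAlgebra B G) *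
            (f ^ 2 * u ^ (J + 1)) * (MonoidAlgebra.single g c) ^ (m₀ - J) := by ring
      rw [hid]
      exact mul_mem (mul_mem (mul_mem (pow_mem (neg_mem (one_mem _)) J) (natCast_mem _ _))
        (hKL (J + 1) 2 (le_refl 2))) (pow_mem hhTT _)
    have heq : u * (MonoidAlgebra.single g c) ^ (m₀ + 2) = W + D := by
      have hmi := magic_identity (MonoidAlgebra.single g c) u m₀
      rw [show MonoidAlgebra.single g c + u = f by rw [hu]; ring] at hmi
      rw [hW, hPm, hD]
      exact hmi
    have hBD : Bnd H φ D (((m₀ : ℤ) + 1) * (φ g - 1) + 2 * φ g) := by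
      rw [hD]
      have B1 : Bnd H φ ((-1 : MonoidAlgebra B G) ^ m₀) 0 := Bnd.negOnePow hφadd m₀
      have B2 : Bnd H φ (u ^ (m₀ + 1)) (((m₀ + 1 : ℕ) : ℤ) * (φ g - 1)) :=
        Bnd.pow hφadd hBu (m₀ + 1) (by omega)
      have B3 : Bnd H φ ((MonoidAlgebra.single g c) ^ 2) (((2 : ℕ) : ℤ) * φ g) :=
        Bnd.pow hφadd (Bnd.single hgH c) 2 (by omega)
      have B4 : Bnd H φ (((m₀ + 1 : ℕ) : MonoidAlgebra B G) *
          (MonoidAlgebra.single g c) ^ 2) (2 * φ g) := by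
        have := Bnd.mul hφadd (Bnd.natCast hφadd (m₀ + 1)) B3
        apply Bnd.mono _ this
        push_cast
        omega
      have B5 : Bnd H φ (((m₀ : ℕ) : MonoidAlgebra B G) * u * (MonoidAlgebra.single g c))
          (2 * φ g) := by
        have := Bnd.mul hφadd (Bnd.mul hφadd (Bnd.natCast hφadd m₀) hBu) (Bnd.single hgH c)
        apply Bnd.mono _ this
        omega
      have B6 := Bnd.add B4 B5
      have B7 := Bnd.mul hφadd (Bnd.mul hφadd B1 B2) B6
      apply Bnd.mono _ B7
      push_cast
      omega
    -- the key coefficient identity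
    have hkey : ∀ a ∈ f.coeff.support, a ≠ g →
        f.coeff a * c ^ (m₀ + 2) = W.coeff (g ^ (m₀ + 2) * a) ∧
          (f.coeff a * c ^ (m₀ + 2) ≠ 0 → g ^ (m₀ + 2) * a ∈ W.coeff.support) := by
      intro a ha hag
      have hD0 : D.coeff (g ^ (m₀ + 2) * a) = 0 := by
        by_contra hne
        have hmem : g ^ (m₀ + 2) * a ∈ D.coeff.support := Finsupp.mem_support_iff.2 hne
        obtain ⟨_, hb⟩ := hBD _ hmem
        have hφw : φ (g ^ (m₀ + 2) * a) = ((m₀ + 2 : ℕ) : ℤ) * φ g + φ a := by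
          rw [hφadd _ (pow_mem hgH _) _ (hSH a ha), phi_pow hφadd hgH]
        have hma := hm₀ a ha
        push_cast at hφw
        have hexp : ((m₀ : ℤ) + 1) * (φ g - 1) = (m₀ : ℤ) * φ g + φ g - (m₀ : ℤ) - 1 := by ring
        have hexp2 : ((m₀ : ℤ) + 2) * φ g = (m₀ : ℤ) * φ g + 2 * φ g := by ring
        omega
      have happ : (u * (MonoidAlgebra.single g c) ^ (m₀ + 2)).coeff (g ^ (m₀ + 2) * a) =
          W.coeff (g ^ (m₀ + 2) * a) + D.coeff (g ^ (m₀ + 2) * a) := by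
        rw [heq]; rfl
      rw [hD0, add_zero] at happ
      rw [MonoidAlgebra.single_pow, MonoidAlgebra.mul_single_apply,
        show g ^ (m₀ + 2) * a * (g ^ (m₀ + 2))⁻¹ = a by rw [mul_comm (g ^ (m₀ + 2)) a, mul_inv_cancel_right], huval a hag] at happ
      constructor
      · exact happ
      · intro hne
        rw [Finsupp.mem_support_iff, ← happ]
        exact hne
    -- the padded element lies in the coefficient subring
    have hhat : (MonoidAlgebra.single g c) ^ (m₀ + 2) * f ∈ coeffSubring A' M' := by
      constructor
      · intro w
        rw [MonoidAlgebra.single_pow, MonoidAlgebra.single_mul_apply]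
        by_cases haf : (g ^ (m₀ + 2))⁻¹ * w ∈ f.coeff.support
        · by_cases hag : (g ^ (m₀ + 2))⁻¹ * w = g
          · rw [hag, ← hc]
            exact mul_mem (pow_mem hcA _) hcA
          · have hk := (hkey _ haf hag).1
            rw [mul_comm]
            rw [show g ^ (m₀ + 2) * ((g ^ (m₀ + 2))⁻¹ * w) = w from mul_inv_cancel_left _ _] at hk
            rw [hk]
            exact hWTT.1 w
        · rw [Finsupp.notMem_support_iff.1 haf, mul_zero]
          exact zero_mem A'
      · intro w hw
        rw [Finsupp.mem_support_iff, MonoidAlgebra.single_pow,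
          MonoidAlgebra.single_mul_apply] at hw
        have haf : (g ^ (m₀ + 2))⁻¹ * w ∈ f.coeff.support := by
          rw [Finsupp.mem_support_iff]
          intro h0
          apply hw
          rw [h0, mul_zero]
        by_cases hag : (g ^ (m₀ + 2))⁻¹ * w = g
        · have hwval : w = g ^ (m₀ + 3) := by
            have : g ^ (m₀ + 2) * ((g ^ (m₀ + 2))⁻¹ * w) = w := mul_inv_cancel_left _ _
            rw [hag] at this
            rw [← this, ← pow_succ]
          rw [hwval]
          exact pow_mem hgM _
        · have hk := hkey _ haf hag
          rw [show g ^ (m₀ + 2) * ((g ^ (m₀ + 2))⁻¹ * w) = w from mul_inv_cancel_left _ _] at hk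
          apply hWTT.2
          apply hk.2
          rw [mul_comm]
          exact hw
    -- back-propagation step
    have hback : ∀ k : ℕ, (MonoidAlgebra.single g c) ^ (k + 1) * f ∈ coeffSubring A' M' →
        (MonoidAlgebra.single g c) ^ k * f ∈ coeffSubring A' M' := by
      intro k hy
      set h' : MonoidAlgebra B G := MonoidAlgebra.single g c with hh'
      set u' : MonoidAlgebra B G := h' ^ k * f - h' ^ (k + 1) with hu'
      have htwo : (2 : MonoidAlgebra B G) ∈ coeffSubring A' M' := natCast_mem _ 2
      have hthree : (3 : MonoidAlgebra B G) ∈ coeffSubring A' M' := natCast_mem _ 3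
      have hu'2 : u' ^ 2 ∈ coeffSubring A' M' := by
        have hid : u' ^ 2 = h' ^ k * h' ^ k * f ^ 2 - 2 * (h' ^ k * (h' ^ (k + 1) * f)) +
            h' ^ (k + 1) * h' ^ (k + 1) := by
          rw [hu']; ring
        rw [hid]
        exact add_mem (sub_mem (mul_mem (mul_mem (pow_mem hhTT k) (pow_mem hhTT k)) hf2)
          (mul_mem htwo (mul_mem (pow_mem hhTT k) hy)))
          (mul_mem (pow_mem hhTT _) (pow_mem hhTT _))
      have hu'3 : u' ^ 3 ∈ coeffSubring A' M' := by
        have hid : u' ^ 3 = h' ^ k * h' ^ k * h' ^ k * f ^ 3 -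
            3 * ((h' ^ k * h' ^ k) * f ^ 2) * h' ^ (k + 1) +
            3 * (h' ^ (k + 1) * f) * (h' ^ k * h' ^ k * h') -
            h' ^ (k + 1) * h' ^ (k + 1) * h' ^ (k + 1) := by
          rw [hu']; ring
        rw [hid]
        refine sub_mem (add_mem (sub_mem ?_ ?_) ?_) ?_
        · exact mul_mem (mul_mem (mul_mem (pow_mem hhTT k) (pow_mem hhTT k)) (pow_mem hhTT k)) hf3
        · exact mul_mem (mul_mem hthree (mul_mem (mul_mem (pow_mem hhTT k) (pow_mem hhTT k)) hf2))
            (pow_mem hhTT _)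
        · exact mul_mem (mul_mem hthree hy) (mul_mem (mul_mem (pow_mem hhTT k) (pow_mem hhTT k)) hhTT)
        · exact mul_mem (mul_mem (pow_mem hhTT _) (pow_mem hhTT _)) (pow_mem hhTT _)
      have hsupp' : u'.coeff.support ⊆ (f.coeff.support.erase g).image (fun b => g ^ k * b) := by
        intro w hw
        rw [Finsupp.mem_support_iff] at hw
        have hval : u'.coeff w = c ^ k * f.coeff ((g ^ k)⁻¹ * w) - (MonoidAlgebra.single (g ^ (k + 1))
            (c ^ (k + 1))).coeff w := by
          rw [hu', MonoidAlgebra.coeff_sub, Finsupp.sub_apply, hh', MonoidAlgebra.single_pow,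
            MonoidAlgebra.single_mul_apply, MonoidAlgebra.single_pow]
        by_cases hwg : w = g ^ (k + 1)
        · exfalso
          apply hw
          rw [hval, hwg]
          classical
          rw [MonoidAlgebra.coeff_single, Finsupp.single_apply, if_pos rfl,
            show (g ^ k)⁻¹ * g ^ (k + 1) = g by rw [pow_succ]; exact inv_mul_cancel_left _ _, ← hc, ← pow_succ]
          exact sub_self _
        · have hsingle0 : (MonoidAlgebra.single (g ^ (k + 1)) (c ^ (k + 1))).coeff w = 0 := by
            classical
            rw [MonoidAlgebra.coeff_single, Finsupp.single_apply, if_neg (fun h => hwg h.symm)]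
          rw [hval, hsingle0, sub_zero] at hw
          have hbf : (g ^ k)⁻¹ * w ∈ f.coeff.support := by
            rw [Finsupp.mem_support_iff]
            intro h0
            apply hw
            rw [h0, mul_zero]
          have hbg : (g ^ k)⁻¹ * w ≠ g := by
            intro h
            apply hwg
            have : g ^ k * ((g ^ k)⁻¹ * w) = w := mul_inv_cancel_left _ _
            rw [h] at this
            rw [← this, ← pow_succ]
          apply Finset.mem_image.2
          exact ⟨(g ^ k)⁻¹ * w, Finset.mem_erase.2 ⟨hbg, hbf⟩, mul_inv_cancel_left _ _⟩
      have hcard' : u'.coeff.support.card ≤ n := by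
        calc u'.coeff.support.card ≤ ((f.coeff.support.erase g).image (fun b => g ^ k * b)).card :=
              Finset.card_le_card hsupp'
          _ ≤ (f.coeff.support.erase g).card := Finset.card_image_le
          _ ≤ n := by rw [Finset.card_erase_of_mem hg]; omega
      have hsuppN' : ∀ a ∈ u'.coeff.support, a ∈ N := by
        intro a ha
        obtain ⟨b, hb, rfl⟩ := Finset.mem_image.1 (hsupp' ha)
        exact mul_mem (pow_mem (hfN g hg) k) (hfN b (Finset.mem_of_mem_erase hb))
      have hu'TT := ih u' hcard' hsuppN' hu'2 hu'3
      have hid2 : h' ^ k * f = u' + h' ^ (k + 1) := by rw [hu']; ring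
      rw [hid2]
      exact add_mem hu'TT (pow_mem hhTT _)
    -- iterate downwards
    have hiter : ∀ j : ℕ, (MonoidAlgebra.single g c) ^ (m₀ + 2 - j) * f ∈ coeffSubring A' M' := by
      intro j
      induction j with
      | zero => simpa using hhat
      | succ j ihj =>
        rcases Nat.lt_or_ge j (m₀ + 2) with hj | hj
        · have hsub : m₀ + 2 - j = (m₀ + 2 - (j + 1)) + 1 := by omega
          rw [hsub] at ihj
          exact hback _ ihj
        · have hsub : m₀ + 2 - (j + 1) = m₀ + 2 - j := by omega
          rw [hsub]
          exact ihj
    have hfinal := hiter (m₀ + 2)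
    rw [Nat.sub_self, pow_zero, one_mul] at hfinal
    exact hfinal

end Main

end SubintegralProof

open SubintegralProof

/-- **Sarwar, Lemma 2.4 (Bruns–Gubeladze, Theorem 4.79).**  Let `A ⊆ B` be an extension of
reduced commutative rings and `M ⊆ N` an extension of commutative cancellative torsion-free
monoids, realized as submonoids of the torsion-free abelian group `G = gp(N)`.  Then the
subintegral closure of `A[M]` in `B[N]` is `⁺A[N ∩ sn(M)]`, where `⁺A` is the subintegral
closure of `A` in `B` and `sn(M)` is the subintegral closure of `M` in `gp(M)` (the subgroup
of `G` generated by `M`). -/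
theorem subintegralClosure_monoidAlgebra_eq
    {B : Type*} [CommRing B] [IsReduced B] (A : Subring B)
    {G : Type*} [CommGroup G] (htf : MulTorsionFree G)
    (M N : Submonoid G) (hMN : M ≤ N)
    (hgp : ∀ g : G, ∃ a ∈ N, ∃ b ∈ N, g = a * b⁻¹) :
    (monoidAlgebraSubring A M).subintegralClosureIn
        (monoidAlgebraSubring (⊤ : Subring B) N) =
      monoidAlgebraSubring (A.subintegralClosure)
        (N ⊓ M.subintegralClosureIn (Subgroup.closure (M : Set G)).toSubmonoid) := by
  apply le_antisymm
  · apply Subring.subintegralClosureIn_le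
    · exact base_le_target A M N hMN
    · intro b hb h2 h3
      rw [mem_monoidAlgebraSubring] at hb
      rw [monoidAlgebraSubring_eq_coeffSubring] at h2 h3 ⊢
      exact main_lemma htf A.subintegralClosure
        (Subring.subintegralClosure_one_step A) N
        (N ⊓ M.subintegralClosureIn (Subgroup.closure (M : Set G)).toSubmonoid)
        (Mprime_one_step M N)
        b.coeff.support.card b (le_refl _) hb.2 h2 h3
  · exact target_le_cl A M N hMN
end
end

section
/- Let S = S₀ ⊕ S₁ ⊕ S₂ ⊕ ⋯ be a commutative ring graded by the natural numbers, and let R ⊆ S be a subring which is graded compatibly, i.e. R = R₀ ⊕ R₁ ⊕ R₂ ⊕ ⋯ with Rᵢ = R ∩ Sᵢ for all i ≥ 0 (equivalently, all homogeneous components of every element of R lie in R). If the canonical map θ : 𝓘(R,S) → 𝓘(R[X],S[X]), induced by the inclusion of S into the polynomial ring S[X] (sending an invertible R-submodule I of S to the R[X]-submodule of S[X] generated by I), is an isomorphism, then the canonical map 𝓘(R₀,S₀) → 𝓘(R,S), induced by the inclusion S₀ ⊆ S, is an isomorphism. -/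
open scoped Classical

noncomputable section

/-- The grade-zero part `S₀` of an `ℕ`-graded commutative ring `S = ⊕ᵢ Sᵢ`, as a subring. -/
def gradeZeroSubring {S : Type*} [CommRing S] (𝒜 : ℕ → AddSubgroup S) [GradedRing 𝒜] :
    Subring S where
  carrier := 𝒜 0
  zero_mem' := (𝒜 0).zero_mem
  add_mem' := fun h1 h2 => (𝒜 0).add_mem h1 h2
  neg_mem' := fun h => (𝒜 0).neg_mem h
  one_mem' := SetLike.one_mem_graded 𝒜
  mul_mem' := fun ha hb => by simpa using SetLike.mul_mem_graded ha hb

open scoped DirectSum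

section SpanMap
variable {A B A' B' : Type*} [CommRing A] [CommRing B] [CommRing A'] [CommRing B']
  [Algebra A B] [Algebra A' B'] (f : B →+* B')
  (hf : ∀ a : A, f (algebraMap A B a) ∈ (algebraMap A' B').range)

include hf in
theorem spanMap_aux (s : Set B) :
    Submodule.span A' (f '' (Submodule.span A s : Set B)) = Submodule.span A' (f '' s) := by
  apply le_antisymm
  · rw [Submodule.span_le]
    rintro _ ⟨x, hx, rfl⟩
    induction hx using Submodule.span_induction with
    | mem x hx => exact Submodule.subset_span ⟨x, hx, rfl⟩
    | zero => simp
    | add x y _ _ hx hy => rw [map_add]; exact add_mem hx hy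
    | smul a x _ hx =>
      obtain ⟨a', ha'⟩ := hf a
      rw [Algebra.smul_def, map_mul, ← ha', ← Algebra.smul_def]
      exact Submodule.smul_mem _ _ hx
  · exact Submodule.span_mono (Set.image_mono Submodule.subset_span)

/-- spanMap as a monoid hom on submodules. -/
def spanMapHom : Submodule A B →* Submodule A' B' where
  toFun I := Submodule.span A' (f '' (I : Set B))
  map_one' := by
    show Submodule.span A' (f '' _) = 1
    rw [Submodule.one_eq_span, spanMap_aux f hf]
    simp [Submodule.one_eq_span]
  map_mul' I J := by
    show Submodule.span A' (f '' _) = Submodule.span A' (f '' _) * Submodule.span A' (f '' _)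
    rw [Submodule.mul_eq_span_mul_set, spanMap_aux f hf, Set.image_mul,
      ← Submodule.span_mul_span, ← spanMap_aux f hf (I : Set B), Submodule.span_eq,
      ← spanMap_aux f hf (J : Set B), Submodule.span_eq]

theorem spanMapHom_apply (I : Submodule A B) :
    spanMapHom f hf I = Submodule.span A' (f '' (I : Set B)) := rfl
end SpanMap

section UnitsSpan
variable {A B A' B' A'' B'' : Type*} [CommRing A] [CommRing B] [CommRing A'] [CommRing B']
  [CommRing A''] [CommRing B'']
  [Algebra A B] [Algebra A' B'] [Algebra A'' B'']

/-- canonical map on invertible submodule groups -/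
def unitsSpan (f : B →+* B')
    (hf : ∀ a : A, f (algebraMap A B a) ∈ (algebraMap A' B').range) :
    (Submodule A B)ˣ →* (Submodule A' B')ˣ :=
  Units.map (spanMapHom f hf)

theorem unitsSpan_coe (f : B →+* B')
    (hf : ∀ a : A, f (algebraMap A B a) ∈ (algebraMap A' B').range)
    (u : (Submodule A B)ˣ) :
    (unitsSpan f hf u : Submodule A' B') = Submodule.span A' (f '' ((u : Submodule A B) : Set B)) :=
  rfl

theorem unitsSpan_comp_coe (f : B →+* B') (g : B' →+* B'')
    (hf : ∀ a : A, f (algebraMap A B a) ∈ (algebraMap A' B').range)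
    (hg : ∀ a : A', g (algebraMap A' B' a) ∈ (algebraMap A'' B'').range)
    (u : (Submodule A B)ˣ) :
    (unitsSpan g hg (unitsSpan f hf u) : Submodule A'' B'') =
      Submodule.span A'' ((fun b => g (f b)) '' ((u : Submodule A B) : Set B)) := by
  rw [unitsSpan_coe, unitsSpan_coe, spanMap_aux g hg, ← Set.image_comp]
  rfl

theorem unitsSpan_comp_id (f : B →+* B') (g : B' →+* B)
    (hf : ∀ a : A, f (algebraMap A B a) ∈ (algebraMap A' B').range)
    (hg : ∀ a : A', g (algebraMap A' B' a) ∈ (algebraMap A B).range)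
    (h : ∀ b, g (f b) = b) (u : (Submodule A B)ˣ) :
    unitsSpan g hg (unitsSpan f hf u) = u := by
  apply Units.ext
  rw [unitsSpan_comp_coe]
  have : (fun b => g (f b)) '' ((u : Submodule A B) : Set B) = ((u : Submodule A B) : Set B) := by
    simp only [funext h, Set.image_id']
  rw [this, Submodule.span_eq]
end UnitsSpan

section Beta
variable {S : Type*} [CommRing S] (𝒜 : ℕ → AddSubgroup S) [GradedRing 𝒜]

/-- components of β -/
def betaAux : ∀ i : ℕ, 𝒜 i →+ Polynomial S := fun i =>
  { toFun := fun x => Polynomial.C (x : S) * Polynomial.X ^ i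
    map_zero' := by simp
    map_add' := fun x y => by push_cast; rw [map_add, add_mul] }

/-- β on the direct sum -/
def betaHom : (⨁ i, 𝒜 i) →+* Polynomial S :=
  DirectSum.toSemiring (betaAux 𝒜)
    (by simp [betaAux, SetLike.coe_gOne])
    (fun {i j} ai aj => by
      simp only [betaAux, AddMonoidHom.coe_mk, ZeroHom.coe_mk, SetLike.coe_gMul, map_mul,
        pow_add]
      ring)

/-- The Swan–Weibel homotopy map `β : S →+* S[X]`, `sᵢ ↦ sᵢ Xⁱ`. -/
def beta : S →+* Polynomial S :=
  (betaHom 𝒜).comp ((DirectSum.decomposeRingEquiv 𝒜 : S ≃+* ⨁ i, 𝒜 i) : S →+* ⨁ i, 𝒜 i)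

theorem beta_apply (s : S) :
    beta 𝒜 s = (DirectSum.decompose 𝒜 s).sum fun i x =>
      Polynomial.C (x : S) * Polynomial.X ^ i := by
  have h1 : beta 𝒜 s = betaHom 𝒜 (DirectSum.decompose 𝒜 s) := rfl
  rw [h1]
  have h2 : betaHom 𝒜 (DirectSum.decompose 𝒜 s)
      = DirectSum.toAddMonoid (betaAux 𝒜) (DirectSum.decompose 𝒜 s) := by
    have := DirectSum.toSemiring_coe_addMonoidHom (betaAux (S := S) 𝒜)
      (by simp [betaAux, SetLike.coe_gOne])
      (fun {i j} ai aj => by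
        simp only [betaAux, AddMonoidHom.coe_mk, ZeroHom.coe_mk, SetLike.coe_gMul, map_mul,
          pow_add]
        ring)
    calc (betaHom 𝒜) (DirectSum.decompose 𝒜 s)
        = ((betaHom 𝒜 : (⨁ i, 𝒜 i) →+ Polynomial S)) (DirectSum.decompose 𝒜 s) := rfl
      _ = DirectSum.toAddMonoid (betaAux 𝒜) (DirectSum.decompose 𝒜 s) := by rw [betaHom, this]
  rw [h2]
  exact DFinsupp.sumAddHom_apply _ _

theorem beta_eval_one (s : S) : (beta 𝒜 s).eval 1 = s := by
  rw [beta_apply, DFinsupp.sum, Polynomial.eval_finset_sum]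
  simp only [Polynomial.eval_mul, Polynomial.eval_C, Polynomial.eval_pow, Polynomial.eval_X,
    one_pow, mul_one]
  exact DirectSum.sum_support_decompose 𝒜 s

theorem beta_eval_zero (s : S) : (beta 𝒜 s).eval 0 = GradedRing.proj 𝒜 0 s := by
  rw [beta_apply, DFinsupp.sum, Polynomial.eval_finset_sum, GradedRing.proj_apply]
  have key : ∀ i ∈ DFinsupp.support (DirectSum.decompose 𝒜 s),
      (Polynomial.C ((DirectSum.decompose 𝒜 s i : S)) * Polynomial.X ^ i).eval 0
        = if i = 0 then ((DirectSum.decompose 𝒜 s i : S)) else 0 := by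
    intro i _
    rcases i with _ | i <;> simp [zero_pow]
  rw [Finset.sum_congr rfl key,
    Finset.sum_ite_eq' _ 0 (fun i => ((DirectSum.decompose 𝒜 s i : S)))]
  split_ifs with h
  · rfl
  · rw [DFinsupp.notMem_support_iff] at h
    rw [h]; rfl
end Beta

set_option maxHeartbeats 1000000 in
/-- **Sarwar, Lemma 3.1 (Swan–Weibel homotopy trick).**  Let `S = S₀ ⊕ S₁ ⊕ ⋯` be an
`ℕ`-graded commutative ring and `R ⊆ S` a compatibly graded subring (all homogeneous
components of elements of `R` lie in `R`).  If the canonical map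
`θ(R,S) : 𝓘(R,S) → 𝓘(R[X],S[X])` is an isomorphism, then the canonical map
`θ(R₀,S₀) : 𝓘(R₀,S₀) → 𝓘(R,S)` is an isomorphism.  Both canonical maps are phrased as the
existence of a group isomorphism whose underlying map is the canonical one. -/
theorem gradeZero_invertibleSubmodules_isIso_of_polynomial_isIso
    {S : Type*} [CommRing S] (𝒜 : ℕ → AddSubgroup S) [GradedRing 𝒜]
    (R : Subring S) (hR : ∀ x ∈ R, ∀ i, GradedRing.proj 𝒜 i x ∈ R)
    (hpoly : ∃ e : (Submodule R S)ˣ ≃*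
        (Submodule (Polynomial.mapRingHom R.subtype).range (Polynomial S))ˣ,
      ∀ I : (Submodule R S)ˣ,
        (e I : Submodule (Polynomial.mapRingHom R.subtype).range (Polynomial S)) =
          Submodule.span (Polynomial.mapRingHom R.subtype).range
            (⇑(Polynomial.C : S →+* Polynomial S) '' ((I : Submodule R S) : Set S))) :
    ∃ e : (Submodule (R.comap (gradeZeroSubring 𝒜).subtype) (gradeZeroSubring 𝒜))ˣ ≃*
        (Submodule R S)ˣ,
      ∀ I : (Submodule (R.comap (gradeZeroSubring 𝒜).subtype) (gradeZeroSubring 𝒜))ˣ,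
        (e I : Submodule R S) =
          Submodule.span R
            (Subtype.val ''
              ((I : Submodule (R.comap (gradeZeroSubring 𝒜).subtype) (gradeZeroSubring 𝒜)) :
                Set (gradeZeroSubring 𝒜))) := by
  set S₀ : Subring S := gradeZeroSubring 𝒜 with hS₀
  set R₀ : Subring S₀ := R.comap S₀.subtype with hR₀
  set P : Subring (Polynomial S) := (Polynomial.mapRingHom R.subtype).range with hP
  obtain ⟨e₀, he₀⟩ := hpoly
  -- the ring homs
  set ι : S₀ →+* S := S₀.subtype with hιdef
  have hι : ∀ a : R₀, ι (algebraMap R₀ S₀ a) ∈ (algebraMap R S).range :=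
    fun a => ⟨⟨(a : S₀), a.2⟩, rfl⟩
  have hproj_mem : ∀ x : S, GradedRing.projZeroRingHom 𝒜 x ∈ S₀ := fun x => by
    show _ ∈ 𝒜 0
    rw [GradedRing.projZeroRingHom_apply, ← GradedRing.proj_apply, GradedRing.proj_apply]
    exact SetLike.coe_mem _
  set π : S →+* S₀ := (GradedRing.projZeroRingHom 𝒜).codRestrict S₀ hproj_mem with hπdef
  have hπcoe : ∀ s : S, (π s : S) = GradedRing.proj 𝒜 0 s := fun s => by
    show GradedRing.projZeroRingHom 𝒜 s = _
    rw [GradedRing.projZeroRingHom_apply, GradedRing.proj_apply]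
  have hπ : ∀ a : R, π (algebraMap R S a) ∈ (algebraMap R₀ S₀).range := fun a => by
    refine ⟨⟨π (a : S), ?_⟩, rfl⟩
    show ((π (a : S) : S)) ∈ R
    rw [hπcoe]
    exact hR _ a.2 0
  have hC : ∀ a : R,
      (Polynomial.C : S →+* Polynomial S) (algebraMap R S a) ∈
        (algebraMap P (Polynomial S)).range := fun a =>
    ⟨⟨Polynomial.C (a : S), ⟨Polynomial.C a, by simp⟩⟩, rfl⟩
  have hev1 : ∀ a : P,
      (Polynomial.evalRingHom (1 : S)) (algebraMap P (Polynomial S) a) ∈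
        (algebraMap R S).range := fun a => by
    obtain ⟨p, hp⟩ := a.2
    refine ⟨Polynomial.eval (1 : R) p, ?_⟩
    show ((Polynomial.eval (1 : R) p : R) : S) = Polynomial.eval 1 (a : Polynomial S)
    rw [← hp, Polynomial.coe_mapRingHom]
    exact (Polynomial.eval_one_map R.subtype p).symm
  have hev0 : ∀ a : P,
      (Polynomial.evalRingHom (0 : S)) (algebraMap P (Polynomial S) a) ∈
        (algebraMap R S).range := fun a => by
    obtain ⟨p, hp⟩ := a.2
    refine ⟨Polynomial.eval (0 : R) p, ?_⟩
    show ((Polynomial.eval (0 : R) p : R) : S) = Polynomial.eval 0 (a : Polynomial S)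
    rw [← hp, Polynomial.coe_mapRingHom]
    exact (Polynomial.eval_zero_map R.subtype p).symm
  have hβ : ∀ a : R, beta 𝒜 (algebraMap R S a) ∈ (algebraMap P (Polynomial S)).range := by
    intro a
    refine ⟨⟨beta 𝒜 (a : S), ?_⟩, rfl⟩
    rw [beta_apply, DFinsupp.sum]
    refine Subring.sum_mem _ fun i _ => ?_
    refine ⟨Polynomial.C ⟨GradedRing.proj 𝒜 i (a : S), hR _ a.2 i⟩ * Polynomial.X ^ i, ?_⟩
    rw [map_mul, map_pow]
    simp [GradedRing.proj_apply]
  -- units-level maps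
  set Uι := unitsSpan (A := R₀) (A' := R) ι hι with hUι
  set Uπ := unitsSpan (A := R) (A' := R₀) π hπ with hUπ
  set UC := unitsSpan (A := R) (A' := P) (Polynomial.C : S →+* Polynomial S) hC with hUC
  set Uβ := unitsSpan (A := R) (A' := P) (beta 𝒜) hβ with hUβ
  set Uev1 := unitsSpan (A := P) (A' := R) (Polynomial.evalRingHom (1 : S)) hev1 with hUev1
  set Uev0 := unitsSpan (A := P) (A' := R) (Polynomial.evalRingHom (0 : S)) hev0 with hUev0
  -- UC agrees with e₀, hence is surjective
  have hUCe : ∀ u, UC u = e₀ u := fun u => Units.ext (by rw [unitsSpan_coe, he₀])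
  have hsurj : Function.Surjective UC := fun w =>
    ⟨e₀.symm w, by rw [hUCe, MulEquiv.apply_symm_apply]⟩
  -- eval at 1 and at 0 agree on the image, hence everywhere
  have h10 : ∀ w, Uev1 w = Uev0 w := by
    intro w
    obtain ⟨u, rfl⟩ := hsurj w
    rw [unitsSpan_comp_id (A := R) _ _ hC hev1 (fun b => by simp) u,
      unitsSpan_comp_id (A := R) _ _ hC hev0 (fun b => by simp) u]
  -- the homotopy: ι ∘ π induces the identity
  have key : ∀ u : (Submodule R S)ˣ, Uι (Uπ u) = u := by
    intro u
    have h1 : Uev1 (Uβ u) = u :=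
      unitsSpan_comp_id (A := R) _ _ hβ hev1 (fun b => beta_eval_one 𝒜 b) u
    have h2 : (Uev0 (Uβ u) : Submodule R S) = (Uι (Uπ u) : Submodule R S) := by
      rw [unitsSpan_comp_coe, unitsSpan_comp_coe]
      congr 1
      apply Set.image_congr'
      intro b
      show Polynomial.eval 0 (beta 𝒜 b) = ((π b : S₀) : S)
      rw [beta_eval_zero, hπcoe]
    have h2' : Uev0 (Uβ u) = Uι (Uπ u) := Units.ext h2
    rw [← h2', ← h10, h1]
  -- π ∘ ι is the identity on S₀
  have hπι : ∀ x : S₀, π (ι x) = x := by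
    intro x
    apply Subtype.ext
    rw [hπcoe]
    show GradedRing.proj 𝒜 0 (x : S) = (x : S)
    rw [GradedRing.proj_apply]
    exact DirectSum.decompose_of_mem_same 𝒜 x.2
  have key2 : ∀ v, Uπ (Uι v) = v := fun v =>
    unitsSpan_comp_id (A := R₀) _ _ hι hπ hπι v
  refine ⟨{ toFun := Uι, invFun := Uπ, left_inv := key2, right_inv := key,
            map_mul' := Uι.map_mul }, fun I => ?_⟩
  show (Uι I : Submodule R S) = _
  rw [unitsSpan_coe]
  rfl
end
end

section
/- Let A ⊆ B be an extension of commutative rings and M a positive commutative cancellative torsion-free monoid (not necessarily finitely generated). If A is subintegrally closed in B, then A[M] is subintegrally closed in B[M]. -/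
open scoped Classical

noncomputable section

namespace SIC

variable {B : Type*} [CommRing B] (A : Subring B)

/-- The subring of a monoid algebra consisting of elements with all coefficients in `A`. -/
def coeffs (G : Type*) [CommMonoid G] : Subring (MonoidAlgebra B G) where
  carrier := {x | ∀ m, x.coeff m ∈ A}
  zero_mem' := by intro m; rw [MonoidAlgebra.coeff_zero, Finsupp.zero_apply]; exact A.zero_mem
  one_mem' := by
    intro m
    classical
    rw [MonoidAlgebra.one_def, MonoidAlgebra.coeff_single, Finsupp.single_apply]
    split_ifs
    · exact A.one_mem
    · exact A.zero_mem
  add_mem' := by intro x y hx hy m; rw [MonoidAlgebra.coeff_add, Finsupp.add_apply]; exact A.add_mem (hx m) (hy m)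
  neg_mem' := by intro x hx m; rw [MonoidAlgebra.coeff_neg, Finsupp.neg_apply]; exact A.neg_mem (hx m)
  mul_mem' := by
    intro x y hx hy m
    classical
    rw [MonoidAlgebra.coeff_mul]
    refine Subring.sum_mem A fun a _ => Subring.sum_mem A fun b _ => ?_
    show (if a * b = m then x.coeff a * y.coeff b else 0) ∈ A
    split_ifs
    · exact A.mul_mem (hx a) (hy b)
    · exact A.zero_mem

theorem mem_coeffs_iff {G : Type*} [CommMonoid G] (x : MonoidAlgebra B G) :
    x ∈ coeffs A G ↔ ∀ m, x.coeff m ∈ A := Iff.rfl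

theorem monoidAlgebraSubring_top {M : Type*} [CommMonoid M] :
    monoidAlgebraSubring A (⊤ : Submonoid M) = coeffs A M := by
  apply le_antisymm
  · rw [monoidAlgebraSubring, Subring.closure_le]
    rintro x ⟨a, ha, m, -, rfl⟩ m'
    classical
    rw [MonoidAlgebra.coeff_single, Finsupp.single_apply]
    split_ifs
    · exact ha
    · exact A.zero_mem
  · intro x hx
    classical
    have : x = ∑ m ∈ x.coeff.support, MonoidAlgebra.single m (x.coeff m) := by
      exact (MonoidAlgebra.sum_coeff_single x).symm
    rw [this]
    refine Subring.sum_mem _ fun m _ => Subring.subset_closure ?_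
    exact ⟨x.coeff m, hx m, m, trivial, rfl⟩


local notation "G" => Multiplicative ℚ

theorem low_mul (p r : MonoidAlgebra B G) {c d : ℚ}
    (hp : ∀ a : G, a.toAdd < c → p.coeff a = 0) (hr : ∀ a : G, a.toAdd < d → r.coeff a = 0) :
    (∀ x : G, x.toAdd < c + d → (p * r).coeff x = 0) ∧
      (p * r).coeff (Multiplicative.ofAdd (c + d)) =
        p.coeff (Multiplicative.ofAdd c) * r.coeff (Multiplicative.ofAdd d) := by
  constructor
  · intro x hx
    rw [MonoidAlgebra.coeff_mul_apply_left, Finsupp.sum]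
    refine Finset.sum_eq_zero fun a ha => ?_
    have hac : c ≤ a.toAdd := by
      by_contra hlt
      exact (Finsupp.mem_support_iff.mp ha) (hp a (lt_of_not_ge hlt))
    have : (a⁻¹ * x).toAdd < d := by
      simp only [toAdd_mul, toAdd_inv]
      linarith
    rw [hr _ this, mul_zero]
  · rw [MonoidAlgebra.coeff_mul_apply_left, Finsupp.sum]
    rw [Finset.sum_eq_single (Multiplicative.ofAdd c)]
    · congr 1
      congr 1
      apply Multiplicative.toAdd.injective
      simp
    · intro a ha hne
      have hac : c ≤ a.toAdd := by
        by_contra hlt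
        exact (Finsupp.mem_support_iff.mp ha) (hp a (lt_of_not_ge hlt))
      have hlt : c < a.toAdd := lt_of_le_of_ne hac (by
        intro hEq
        exact hne (by apply Multiplicative.toAdd.injective; simp [← hEq]))
      have : (a⁻¹ * Multiplicative.ofAdd (c + d)).toAdd < d := by
        simp only [toAdd_mul, toAdd_inv,
          toAdd_ofAdd]
        linarith
      rw [hr _ this, mul_zero]
    · intro hnot
      rw [Finsupp.notMem_support_iff.mp hnot, zero_mul]

theorem high_mul (p r : MonoidAlgebra B G) {c d : ℚ}
    (hp : ∀ a ∈ p.coeff.support, Multiplicative.toAdd a ≤ c)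
    (hr : ∀ a ∈ r.coeff.support, Multiplicative.toAdd a ≤ d) :
    ∀ x : G, c + d < x.toAdd → (p * r).coeff x = 0 := by
  intro x hx
  rw [MonoidAlgebra.coeff_mul_apply_left, Finsupp.sum]
  refine Finset.sum_eq_zero fun a ha => ?_
  have h1 : a.toAdd ≤ c := hp a ha
  have : r.coeff (a⁻¹ * x) = 0 := by
    by_contra hne
    have := hr _ (Finsupp.mem_support_iff.mpr hne)
    simp only [toAdd_mul, toAdd_inv] at this
    linarith
  rw [this, mul_zero]

theorem high_mul_support (p r : MonoidAlgebra B G) {c d : ℚ}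
    (hp : ∀ a ∈ p.coeff.support, Multiplicative.toAdd a ≤ c)
    (hr : ∀ a ∈ r.coeff.support, Multiplicative.toAdd a ≤ d) :
    ∀ x ∈ (p * r).coeff.support, Multiplicative.toAdd x ≤ c + d := by
  intro x hx
  by_contra hgt
  exact (Finsupp.mem_support_iff.mp hx) (high_mul p r hp hr x (lt_of_not_ge hgt))

theorem low_pow_s12 (p : MonoidAlgebra B G) {c : ℚ}
    (hp : ∀ a : G, a.toAdd < c → p.coeff a = 0) (n : ℕ) :
    (∀ x : G, x.toAdd < n * c → (p ^ n).coeff x = 0) ∧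
      (p ^ n).coeff (Multiplicative.ofAdd ((n : ℚ) * c)) = (p.coeff (Multiplicative.ofAdd c)) ^ n := by
  induction n with
  | zero =>
    constructor
    · intro x hx
      rw [pow_zero, MonoidAlgebra.one_def, MonoidAlgebra.coeff_single, Finsupp.single_apply, if_neg, ]
      · intro h1
        rw [← h1] at hx
        simp at hx
    · rw [pow_zero, pow_zero]
      simp only [Nat.cast_zero, zero_mul, ofAdd_zero, MonoidAlgebra.one_def]
      rw [MonoidAlgebra.coeff_single, Finsupp.single_apply, if_pos rfl]
  | succ n ih =>
    have hcast : ((n + 1 : ℕ) : ℚ) * c = (n : ℚ) * c + c := by push_cast; ring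
    have L := low_mul (p ^ n) p (c := (n : ℚ) * c) (d := c) ih.1 hp
    constructor
    · intro x hx
      rw [pow_succ]
      exact L.1 x (by rw [hcast] at hx; exact hx)
    · rw [pow_succ, hcast, L.2, ih.2, pow_succ]

theorem high_pow (p : MonoidAlgebra B G) {c : ℚ}
    (hp : ∀ a ∈ p.coeff.support, Multiplicative.toAdd a ≤ c) (n : ℕ) :
    ∀ x ∈ (p ^ n).coeff.support, Multiplicative.toAdd x ≤ (n : ℚ) * c := by
  induction n with
  | zero =>
    intro x hx
    rw [pow_zero, MonoidAlgebra.one_def, MonoidAlgebra.coeff_single] at hx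
    have := Finsupp.support_single_subset hx
    simp only [Finset.mem_singleton] at this
    simp [this]
  | succ n ih =>
    intro x hx
    rw [pow_succ] at hx
    have := high_mul_support (p ^ n) p ih hp x hx
    calc Multiplicative.toAdd x ≤ (n : ℚ) * c + c := this
    _ = ((n + 1 : ℕ) : ℚ) * c := by push_cast; ring

theorem pow_descent {A : Subring B} (hA : ∀ b : B, b ^ 2 ∈ A → b ^ 3 ∈ A → b ∈ A) (b : B) :
    ∀ N : ℕ, (∀ n, N ≤ n → b ^ n ∈ A) → b ∈ A := by
  intro N
  induction N with
  | zero => intro h; simpa using h 1 (by omega)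
  | succ m ih =>
    intro h
    apply ih
    intro k hk
    rcases eq_or_lt_of_le hk with hEq | hlt
    · rcases Nat.eq_zero_or_pos k with h0 | hpos
      · subst h0; simpa using A.one_mem
      · refine hA (b ^ k) ?_ ?_
        · rw [← pow_mul]; exact h (k * 2) (by omega)
        · rw [← pow_mul]; exact h (k * 3) (by omega)
    · exact h k (by omega)


theorem mapDomain_apply'' {α β N : Type*} [AddCommMonoid N] (f : α → β) (H : α →₀ N) (x : β) :
    Finsupp.mapDomain f H x = ∑ v ∈ H.support.filter (fun v => f v = x), H v := by
  classical
  rw [Finsupp.mapDomain, Finsupp.sum_apply, Finsupp.sum, Finset.sum_filter]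
  exact Finset.sum_congr rfl fun v _ => by rw [Finsupp.single_apply]

theorem int_toNat_mul (m : ℕ) (x : ℤ) : ((m : ℤ) * x).toNat = m * x.toNat := by
  rcases le_or_gt 0 x with hx | hx
  · obtain ⟨y, rfl⟩ := Int.eq_ofNat_of_zero_le hx
    rw [← Nat.cast_mul, Int.toNat_natCast, Int.toNat_natCast]
  · have h1 : (m : ℤ) * x ≤ 0 := mul_nonpos_of_nonneg_of_nonpos (by positivity) hx.le
    rw [Int.toNat_of_nonpos h1, Int.toNat_of_nonpos hx.le, mul_zero]

theorem exists_injOn_hom {Qm : Type*} [AddCommGroup Qm] [Module ℤ Qm] [Module.Finite ℤ Qm]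
    [Module.Free ℤ Qm] (T : Finset Qm) : ∃ φ : Qm →+ ℚ, Set.InjOn φ T := by
  classical
  set ι := Module.Free.ChooseBasisIndex ℤ Qm with hι
  set bQ := Module.Free.chooseBasis ℤ Qm with hbQ
  set ρ : ι ≃ Fin (Fintype.card ι) := Fintype.equivFin ι with hρ
  set φf : ℚ → (Qm →+ ℚ) := fun t =>
    { toFun := fun x => ∑ j : ι, ((bQ.repr x j : ℤ) : ℚ) * t ^ (ρ j : ℕ)
      map_zero' := by simp
      map_add' := by
        intro x y
        rw [← Finset.sum_add_distrib]
        refine Finset.sum_congr rfl fun j _ => ?_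
        rw [map_add, Finsupp.add_apply]
        push_cast
        ring } with hφf
  have key : ∀ x y : Qm, x ≠ y → ∃ p : Polynomial ℚ, p ≠ 0 ∧ ∀ t, φf t x - φf t y = p.eval t := by
    intro x y hxy
    set c := bQ.repr (x - y) with hc
    have hc0 : c ≠ 0 := by
      rw [hc]
      intro h
      exact hxy (sub_eq_zero.mp (by simpa using (LinearEquiv.map_eq_zero_iff bQ.repr).mp h))
    obtain ⟨j₀, hj₀⟩ : ∃ j, c j ≠ 0 := by
      by_contra hall
      push_neg at hall
      exact hc0 (Finsupp.ext hall)
    refine ⟨∑ j : ι, Polynomial.C ((c j : ℤ) : ℚ) * Polynomial.X ^ (ρ j : ℕ), ?_, ?_⟩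
    · intro hp
      have h2 := congrArg (fun p => Polynomial.coeff p (ρ j₀ : ℕ)) hp
      simp only [Polynomial.finset_sum_coeff, Polynomial.coeff_C_mul, Polynomial.coeff_X_pow,
        Polynomial.coeff_zero] at h2
      rw [Finset.sum_eq_single j₀ (fun j _ hj => ?_) (fun hj => absurd (Finset.mem_univ j₀) hj)]
        at h2
      · rw [if_pos rfl, mul_one] at h2
        exact hj₀ (by exact_mod_cast h2)
      · rw [if_neg, mul_zero]
        intro hEq
        exact hj (ρ.injective (Fin.ext hEq.symm))
    · intro t
      have hval : ∀ z : Qm, φf t z = ∑ j : ι, ((bQ.repr z j : ℤ) : ℚ) * t ^ (ρ j : ℕ) :=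
        fun z => rfl
      rw [hval, hval, ← Finset.sum_sub_distrib, Polynomial.eval_finset_sum]
      refine Finset.sum_congr rfl fun j _ => ?_
      rw [Polynomial.eval_mul, Polynomial.eval_C, Polynomial.eval_pow, Polynomial.eval_X,
        hc, map_sub, Finsupp.sub_apply]
      push_cast
      ring
  set Bad : Set ℚ := {t | ∃ x ∈ T, ∃ y ∈ T, x ≠ y ∧ φf t x = φf t y} with hBad
  have hfin : Bad.Finite := by
    have hsub : Bad ⊆ ⋃ x ∈ (T : Set Qm), ⋃ y ∈ (T : Set Qm),
        {t : ℚ | x ≠ y ∧ φf t x = φf t y} := by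
      rintro t ⟨x, hx, y, hy, hne, hEq⟩
      exact Set.mem_biUnion hx (Set.mem_biUnion hy ⟨hne, hEq⟩)
    refine Set.Finite.subset ?_ hsub
    refine Set.Finite.biUnion T.finite_toSet fun x _ => Set.Finite.biUnion T.finite_toSet
      fun y _ => ?_
    by_cases hxy : x = y
    · refine Set.Finite.subset (Set.finite_empty) ?_
      rintro t ⟨hne, -⟩
      exact hne hxy
    · obtain ⟨p, hp0, hpeval⟩ := key x y hxy
      refine Set.Finite.subset (Polynomial.finite_setOf_isRoot hp0) ?_
      rintro t ⟨-, hEq⟩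
      show p.IsRoot t
      rw [Polynomial.IsRoot, ← hpeval t, hEq, sub_self]
  obtain ⟨t, ht⟩ := (hfin.infinite_compl).nonempty
  refine ⟨φf t, fun x hx y hy hEq => ?_⟩
  by_contra hne
  exact ht ⟨x, hx, y, hy, hne, hEq⟩


set_option maxHeartbeats 1000000 in
theorem core (hA : ∀ b : B, b ^ 2 ∈ A → b ^ 3 ∈ A → b ∈ A)
    (g : MonoidAlgebra B G) (h2 : g * g ∈ coeffs A G) (h3 : g * g * g ∈ coeffs A G) :
    g ∈ coeffs A G := by
  -- all powers n ≥ 2 have coefficients in A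
  have hpow : ∀ n : ℕ, 2 ≤ n → g ^ n ∈ coeffs A G := by
    intro n hn
    induction n using Nat.strong_induction_on with
    | _ n ih =>
      rcases lt_or_ge n 4 with h4 | h4
      · interval_cases n
        · rwa [pow_two]
        · rw [pow_succ, pow_two]; exact h3
      · have hEq : g ^ n = g ^ (n - 2) * g ^ 2 := by rw [← pow_add]; congr 1; omega
        rw [hEq]
        exact (coeffs A G).mul_mem (ih (n - 2) (by omega) (by omega)) (by rwa [pow_two])
  intro x₀
  by_contra hx₀
  have hx₀s : x₀ ∈ g.coeff.support :=
    Finsupp.mem_support_iff.mpr (fun h0 => hx₀ (h0 ▸ A.zero_mem))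
  set D : Finset G := g.coeff.support.filter (fun x => g.coeff x ∉ A) with hD
  have hx₀D : x₀ ∈ D := Finset.mem_filter.mpr ⟨hx₀s, hx₀⟩
  have hD' : (D.image Multiplicative.toAdd).Nonempty :=
    ⟨_, Finset.mem_image_of_mem _ hx₀D⟩
  set e : ℚ := (D.image Multiplicative.toAdd).min' hD' with he
  obtain ⟨y₀, hy₀D, hy₀e⟩ := Finset.mem_image.mp ((D.image Multiplicative.toAdd).min'_mem hD')
  have hy₀supp : y₀ ∈ g.coeff.support := (Finset.mem_filter.mp hy₀D).1
  have hy₀A : g.coeff y₀ ∉ A := (Finset.mem_filter.mp hy₀D).2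
  have hy₀ofAdd : y₀ = Multiplicative.ofAdd e := by
    apply Multiplicative.toAdd.injective; simpa using hy₀e
  have hmin : ∀ z ∈ D, e ≤ Multiplicative.toAdd z := fun z hz =>
    Finset.min'_le _ _ (Finset.mem_image_of_mem _ hz)
  have hlow : ∀ z ∈ g.coeff.support, Multiplicative.toAdd z < e → g.coeff z ∈ A := by
    intro z hz hlt
    by_contra hzA
    exact absurd (hmin z (Finset.mem_filter.mpr ⟨hz, hzA⟩)) (not_le.mpr hlt)
  set Fq : Finset G := g.coeff.support.filter (fun z => Multiplicative.toAdd z < e) with hFq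
  set q : MonoidAlgebra B G := ∑ z ∈ Fq, MonoidAlgebra.single z (g.coeff z) with hq
  have hq_apply : ∀ z', q.coeff z' = if z' ∈ Fq then g.coeff z' else 0 := by
    intro z'
    rw [hq, MonoidAlgebra.coeff_sum, Finset.sum_apply']
    rw [show (∑ z ∈ Fq, (MonoidAlgebra.single z (g.coeff z)).coeff z')
        = ∑ z ∈ Fq, if z = z' then g.coeff z else 0 from
      Finset.sum_congr rfl fun z _ => Finsupp.single_apply]
    exact Finset.sum_ite_eq' Fq z' (fun z => g.coeff z)
  have hqA : q ∈ coeffs A G := by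
    refine Subring.sum_mem _ fun z hz => ?_
    intro m
    rw [MonoidAlgebra.coeff_single, Finsupp.single_apply]
    split_ifs
    · exact hlow z (Finset.mem_filter.mp hz).1 (Finset.mem_filter.mp hz).2
    · exact A.zero_mem
  set h : MonoidAlgebra B G := g - q with hh
  have hh_low : ∀ z : G, Multiplicative.toAdd z < e → h.coeff z = 0 := by
    intro z hz
    rw [hh, MonoidAlgebra.coeff_sub, Finsupp.sub_apply, hq_apply]
    split_ifs with hc
    · exact sub_self _
    · have hzs : z ∉ g.coeff.support := fun hzs => hc (Finset.mem_filter.mpr ⟨hzs, hz⟩)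
      rw [Finsupp.notMem_support_iff.mp hzs, sub_zero]
  have hh_e : h.coeff (Multiplicative.ofAdd e) = g.coeff y₀ := by
    rw [hh, MonoidAlgebra.coeff_sub, Finsupp.sub_apply, hq_apply]
    split_ifs with hc
    · exact absurd (Finset.mem_filter.mp hc).2 (by simp)
    · rw [← hy₀ofAdd, sub_zero]
  -- the claim: (g y₀)^n ∈ A for all large n
  suffices hcl : ∃ N, ∀ n, N ≤ n → (g.coeff y₀) ^ n ∈ A by
    obtain ⟨N, hN⟩ := hcl
    exact hy₀A (pow_descent hA (g.coeff y₀) N hN)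
  have hbin : ∀ n : ℕ, h ^ n = ∑ i ∈ Finset.range (n + 1),
      g ^ i * (-q) ^ (n - i) * ((n.choose i : ℕ) : MonoidAlgebra B G) := by
    intro n
    rw [hh, sub_eq_add_neg, add_pow]
  have hgsupp_ne : (g.coeff.support.image Multiplicative.toAdd).Nonempty :=
    ⟨_, Finset.mem_image_of_mem _ hy₀supp⟩
  set c : ℚ := (g.coeff.support.image Multiplicative.toAdd).max' hgsupp_ne with hcdef
  have hgc : ∀ z ∈ g.coeff.support, Multiplicative.toAdd z ≤ c := fun z hz =>
    Finset.le_max' _ _ (Finset.mem_image_of_mem _ hz)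
  have hFqe : ∀ z ∈ Fq, Multiplicative.toAdd z < e := fun z hz => (Finset.mem_filter.mp hz).2
  set qm : ℚ := if hne : Fq.Nonempty then (Fq.image Multiplicative.toAdd).max' (hne.image _)
    else e - 1 with hqmdef
  have hqm_lt : qm < e := by
    rw [hqmdef]
    split_ifs with hne
    · obtain ⟨z, hz, hze⟩ := Finset.mem_image.mp ((Fq.image Multiplicative.toAdd).max'_mem (hne.image _))
      rw [← hze]
      exact hFqe z hz
    · linarith
  have hq_supp : ∀ z ∈ q.coeff.support, Multiplicative.toAdd z ≤ qm := by
    intro z hz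
    have hzq : q.coeff z ≠ 0 := Finsupp.mem_support_iff.mp hz
    rw [hq_apply] at hzq
    have hzFq : z ∈ Fq := by
      by_contra hc2
      rw [if_neg hc2] at hzq
      exact hzq rfl
    rw [hqmdef, dif_pos ⟨z, hzFq⟩]
    exact Finset.le_max' _ _ (Finset.mem_image_of_mem _ hzFq)
  have hnq_supp : ∀ z ∈ (-q).coeff.support, Multiplicative.toAdd z ≤ qm := by
    intro z hz
    exact hq_supp z (by rwa [MonoidAlgebra.coeff_neg, Finsupp.support_neg] at hz)
  have hnat_supp : ∀ (m : ℕ) (a : G), a ∈ ((m : MonoidAlgebra B G)).coeff.support →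
      Multiplicative.toAdd a ≤ 0 := by
    intro m a ha
    rw [MonoidAlgebra.natCast_def, MonoidAlgebra.coeff_single] at ha
    have := Finsupp.support_single_subset ha
    simp only [Finset.mem_singleton] at this
    simp [this]
  obtain ⟨n₁, hn₁⟩ := exists_nat_gt ((c - qm) / (e - qm))
  refine ⟨max 2 n₁, fun n hn => ?_⟩
  have hn2 : 2 ≤ n := le_trans (le_max_left _ _) hn
  have hnq1 : (n₁ : ℚ) ≤ (n : ℚ) := by
    exact_mod_cast le_trans (le_max_right _ _) hn
  have hpos : (0 : ℚ) < e - qm := by linarith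
  have hdiv : c - qm < (n : ℚ) * (e - qm) :=
    (div_lt_iff₀ hpos).mp (lt_of_lt_of_le hn₁ hnq1)
  have hkey : c + ((n : ℚ) - 1) * qm < (n : ℚ) * e := by nlinarith [hdiv]
  have hkey0 : (n : ℚ) * qm < (n : ℚ) * e := by
    have : (0:ℚ) < (n:ℚ) := by
      have : (2:ℚ) ≤ (n:ℚ) := by exact_mod_cast hn2
      linarith
    nlinarith
  have hcoefA : (h ^ n).coeff (Multiplicative.ofAdd ((n : ℚ) * e)) ∈ A := by
    rw [hbin n, MonoidAlgebra.coeff_sum, Finset.sum_apply']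
    refine Subring.sum_mem A fun i hi => ?_
    rcases lt_or_ge i 2 with hi2 | hi2
    · interval_cases i
      · rw [pow_zero, one_mul, Nat.sub_zero]
        have h0 : ((-q) ^ n * ((n.choose 0 : ℕ) : MonoidAlgebra B G)).coeff
            (Multiplicative.ofAdd ((n : ℚ) * e)) = 0 := by
          refine high_mul _ _ (high_pow (-q) hnq_supp n) (hnat_supp _) _ ?_
          simpa using hkey0
        rw [h0]; exact A.zero_mem
      · rw [pow_one]
        have hsup1 : ∀ x ∈ (g * (-q) ^ (n - 1)).coeff.support,
            Multiplicative.toAdd x ≤ c + ((n - 1 : ℕ) : ℚ) * qm :=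
          high_mul_support _ _ hgc (high_pow (-q) hnq_supp (n - 1))
        have h0 : (g * (-q) ^ (n - 1) * ((n.choose 1 : ℕ) : MonoidAlgebra B G)).coeff
            (Multiplicative.ofAdd ((n : ℚ) * e)) = 0 := by
          refine high_mul _ _ hsup1 (hnat_supp _) _ ?_
          have hc1 : ((n - 1 : ℕ) : ℚ) = (n : ℚ) - 1 := by
            have : 1 ≤ n := by omega
            push_cast [Nat.cast_sub this]
            ring
          rw [hc1]
          simpa using hkey
        rw [h0]; exact A.zero_mem
    · exact (coeffs A G).mul_mem
        ((coeffs A G).mul_mem (hpow i hi2)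
          (Subring.pow_mem _ ((coeffs A G).neg_mem hqA) _))
        (natCast_mem (coeffs A G) _) _
  have hval := (low_pow_s12 h hh_low n).2
  rw [hval, hh_e] at hcoefA
  exact hcoefA


set_option maxHeartbeats 2000000 in
theorem transfer {M : Type*} [CancelCommMonoid M] (htf : MulTorsionFree M)
    (hA : ∀ b : B, b ^ 2 ∈ A → b ^ 3 ∈ A → b ∈ A) (b : MonoidAlgebra B M)
    (h2 : ∀ m, (b * b).coeff m ∈ A) (h3 : ∀ m, (b * b * b).coeff m ∈ A) : ∀ m, b.coeff m ∈ A := by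
  intro m₀
  by_cases hm₀ : m₀ ∈ b.coeff.support
  swap
  · rw [Finsupp.notMem_support_iff.mp hm₀]; exact A.zero_mem
  set k := b.coeff.support.card with hk
  set σ : {x // x ∈ b.coeff.support} ≃ Fin k := b.coeff.support.equivFin with hσ
  set s : Fin k → M := fun i => ((σ.symm i : {x // x ∈ b.coeff.support}) : M) with hs
  have hs_surj : ∀ m ∈ b.coeff.support, ∃ i, s i = m := fun m hm =>
    ⟨σ ⟨m, hm⟩, by rw [hs]; simp⟩
  -- the product map
  set Pn : (Fin k → ℕ) → M := fun a => ∏ i, s i ^ a i with hPn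
  have hPn_add : ∀ a a' : Fin k → ℕ, Pn (a + a') = Pn a * Pn a' := by
    intro a a'
    rw [hPn, ← Finset.prod_mul_distrib]
    exact Finset.prod_congr rfl fun i _ => by rw [Pi.add_apply, pow_add]
  have hPn_smul : ∀ (m : ℕ) (a : Fin k → ℕ), Pn (m • a) = (Pn a) ^ m := by
    intro m a
    rw [hPn, ← Finset.prod_pow]
    exact Finset.prod_congr rfl fun i _ => by rw [Pi.smul_apply, smul_eq_mul, pow_mul']
  -- the lattice of relations
  set LZ : AddSubgroup (Fin k → ℤ) :=
    { carrier := {v | Pn (fun i => (v i).toNat) = Pn (fun i => (-v i).toNat)}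
      zero_mem' := rfl
      add_mem' := by
        intro u v hu hv
        have hkey : (fun i => ((u + v) i).toNat) + ((fun i => (-u i).toNat) + fun i => (-v i).toNat)
            = (fun i => (-(u + v) i).toNat) + ((fun i => (u i).toNat) + fun i => (v i).toNat) := by
          funext i
          simp only [Pi.add_apply, Pi.neg_apply]
          omega
        have := congrArg Pn hkey
        rw [hPn_add, hPn_add, hPn_add, hPn_add] at this
        rw [Set.mem_setOf_eq] at hu hv ⊢
        rw [hu, hv] at this
        exact mul_right_cancel this
      neg_mem' := by
        intro v hv
        rw [Set.mem_setOf_eq] at hv ⊢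
        simpa using hv.symm } with hLZ
  set Lsub := LZ.toIntSubmodule with hLsub
  set Qm := (Fin k → ℤ) ⧸ Lsub with hQm
  haveI hfinQ : Module.Finite ℤ Qm := Module.Finite.of_surjective Lsub.mkQ
    (Submodule.mkQ_surjective _)
  haveI hnzQ : NoZeroSMulDivisors ℤ Qm := by
    refine ⟨fun {n} {q} hnq => ?_⟩
    by_cases hn : n = 0
    · exact Or.inl hn
    right
    obtain ⟨v, rfl⟩ := Submodule.mkQ_surjective Lsub q
    have hmem : n • v ∈ LZ := by
      have h0 : Lsub.mkQ (n • v) = 0 := by rw [map_smul]; exact hnq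
      rw [Submodule.mkQ_apply, Submodule.Quotient.mk_eq_zero] at h0
      exact h0
    have hL : ∀ (m : ℕ), m ≠ 0 → ∀ w : Fin k → ℤ, (m : ℤ) • w ∈ LZ → w ∈ LZ := by
      intro m hm w hw
      have h1 : (fun i => (((m : ℤ) • w) i).toNat) = m • fun i => (w i).toNat := by
        funext i
        simp only [Pi.smul_apply, smul_eq_mul]
        exact int_toNat_mul m (w i)
      have h2' : (fun i => (-((m : ℤ) • w) i).toNat) = m • fun i => (-w i).toNat := by
        funext i
        simp only [Pi.smul_apply, smul_eq_mul]
        rw [← int_toNat_mul m (-(w i))]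
        ring_nf
      have hw' := hw
      show Pn _ = Pn _
      have : Pn (fun i => (w i).toNat) ^ m = Pn (fun i => (-w i).toNat) ^ m := by
        rw [← hPn_smul, ← hPn_smul, ← h1, ← h2']
        exact hw'
      exact htf _ _ m hm this
    rcases lt_or_gt_of_ne hn with hneg | hpos
    · have : ((-n).toNat : ℤ) • (-v) ∈ LZ := by
        have hcast : ((-n).toNat : ℤ) = -n := Int.toNat_of_nonneg (by omega)
        rw [hcast]
        have : (-n) • (-v) = n • v := by rw [neg_smul, smul_neg, neg_neg]
        rw [this]
        exact hmem
      have hv : -v ∈ LZ := hL (-n).toNat (by omega) (-v) this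
      have hvL : v ∈ LZ := by simpa using LZ.neg_mem hv
      rw [Submodule.mkQ_apply, Submodule.Quotient.mk_eq_zero]
      exact hvL
    · have hcast : (n.toNat : ℤ) = n := Int.toNat_of_nonneg (by omega)
      have hvL : v ∈ LZ := hL n.toNat (by omega) v (by rw [hcast]; exact hmem)
      rw [Submodule.mkQ_apply, Submodule.Quotient.mk_eq_zero]
      exact hvL
  haveI hfreeQ : Module.Free ℤ Qm := Module.free_of_finite_type_torsion_free'
  set gen : Fin k → Multiplicative (Fin k → ℕ) :=
    fun i => Multiplicative.ofAdd (Pi.single i 1) with hgen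
  set π : Multiplicative (Fin k → ℕ) →* M :=
    { toFun := fun a => Pn (Multiplicative.toAdd a)
      map_one' := by
        show Pn (Multiplicative.toAdd 1) = 1
        rw [hPn]
        exact Finset.prod_eq_one fun i _ => pow_zero _
      map_mul' := fun a a' => by
        show Pn (Multiplicative.toAdd (a * a')) = _
        rw [toAdd_mul, hPn_add] } with hπ
  have hπ_apply : ∀ v, π v = Pn (Multiplicative.toAdd v) := fun v => rfl
  set F : MonoidAlgebra B (Multiplicative (Fin k → ℕ)) :=
    ∑ i : Fin k, MonoidAlgebra.single (gen i) (b.coeff (s i)) with hF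
  set V : Finset (Multiplicative (Fin k → ℕ)) :=
    F.coeff.support ∪ (F * F).coeff.support ∪ (F * F * F).coeff.support with hV
  set toQ : Multiplicative (Fin k → ℕ) → Qm :=
    fun v => Lsub.mkQ (fun i => ((Multiplicative.toAdd v) i : ℤ)) with htoQ
  have hmemLZ : ∀ u : Fin k → ℤ,
      u ∈ LZ ↔ Pn (fun i => (u i).toNat) = Pn (fun i => (-u i).toNat) := fun u => Iff.rfl
  have htoQ_iff : ∀ v w, toQ v = toQ w ↔ π v = π w := by
    intro v w
    set v' := Multiplicative.toAdd v with hv'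
    set w' := Multiplicative.toAdd w with hw'
    have hd : ((fun i => (v' i : ℤ)) - fun i => (w' i : ℤ)) = fun i => ((v' i : ℤ) - w' i) := rfl
    have hQeq : toQ v = toQ w ↔ (fun i => ((v' i : ℤ) - w' i)) ∈ LZ := by
      simp only [htoQ]
      rw [Submodule.mkQ_apply, Submodule.mkQ_apply, Submodule.Quotient.eq, hd]
      exact Iff.rfl
    have hplus : (fun i => ((v' i : ℤ) - w' i).toNat) + w'
        = (fun i => (-((v' i : ℤ) - w' i)).toNat) + v' := by
      funext i
      simp only [Pi.add_apply]
      omega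
    have hPneq := congrArg Pn hplus
    rw [hPn_add, hPn_add] at hPneq
    rw [hπ_apply, hπ_apply, ← hv', ← hw']
    rw [hQeq, hmemLZ]
    have hneg : (fun i => (-((v' i : ℤ) - w' i)).toNat)
        = fun i => ((-(fun i => ((v' i : ℤ) - w' i)) i)).toNat := rfl
    constructor
    · intro h
      rw [h] at hPneq
      exact (mul_left_cancel hPneq).symm
    · intro h
      rw [← h] at hPneq
      exact mul_right_cancel hPneq
  obtain ⟨φ, hφinj⟩ := exists_injOn_hom (V.image toQ)
  set χ : Multiplicative (Fin k → ℕ) →* Multiplicative ℚ :=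
    { toFun := fun v => Multiplicative.ofAdd (φ (toQ v))
      map_one' := by
        have h1 : toQ 1 = 0 := by
          simp only [htoQ]
          have : (fun i => ((Multiplicative.toAdd (1 : Multiplicative (Fin k → ℕ))) i : ℤ))
              = (0 : Fin k → ℤ) := by funext i; simp
          rw [this, map_zero]
        show Multiplicative.ofAdd (φ (toQ 1)) = 1
        rw [h1, map_zero, ofAdd_zero]
      map_mul' := fun v w => by
        have h1 : toQ (v * w) = toQ v + toQ w := by
          simp only [htoQ]
          have : (fun i => ((Multiplicative.toAdd (v * w)) i : ℤ))
              = (fun i => ((Multiplicative.toAdd v) i : ℤ))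
                + fun i => ((Multiplicative.toAdd w) i : ℤ) := by
            funext i
            rw [toAdd_mul]
            push_cast
            rfl
          rw [this, map_add]
        show Multiplicative.ofAdd (φ (toQ (v * w))) = _
        rw [h1, map_add, ofAdd_add] } with hχ
  have hχ_apply : ∀ v, χ v = Multiplicative.ofAdd (φ (toQ v)) := fun v => rfl
  have hχ_iff : ∀ v ∈ V, ∀ w ∈ V, (χ v = χ w ↔ π v = π w) := by
    intro v hv w hw
    rw [← htoQ_iff]
    constructor
    · intro h
      refine hφinj (Finset.mem_coe.mpr (Finset.mem_image_of_mem _ hv))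
        (Finset.mem_coe.mpr (Finset.mem_image_of_mem _ hw)) ?_
      have := congrArg Multiplicative.toAdd h
      simpa [hχ_apply] using this
    · intro h
      rw [hχ_apply, hχ_apply, h]
  set Ψ := MonoidAlgebra.mapDomainRingHom B π with hΨ
  set Φ := MonoidAlgebra.mapDomainRingHom B χ with hΦ
  have hΨ_apply : ∀ (H : MonoidAlgebra B (Multiplicative (Fin k → ℕ))) (x : M),
      (Ψ H).coeff x = ∑ v ∈ H.coeff.support.filter (fun v => π v = x), H.coeff v := by
    intro H x
    rw [show (Ψ H).coeff = Finsupp.mapDomain π H.coeff from rfl, mapDomain_apply'']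
  have hΦ_apply : ∀ (H : MonoidAlgebra B (Multiplicative (Fin k → ℕ)))
      (x : Multiplicative ℚ),
      (Φ H).coeff x = ∑ v ∈ H.coeff.support.filter (fun v => χ v = x), H.coeff v := by
    intro H x
    rw [show (Φ H).coeff = Finsupp.mapDomain χ H.coeff from rfl,
      mapDomain_apply'']
    exact Finset.sum_congr (Finset.filter_congr_decidable ..) fun _ _ => rfl
  have hπgen : ∀ i, π (gen i) = s i := by
    intro i
    rw [hπ_apply, hgen]
    show Pn (Multiplicative.toAdd (Multiplicative.ofAdd (Pi.single i 1))) = s i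
    rw [toAdd_ofAdd, hPn]
    show (∏ j : Fin k, s j ^ (Pi.single i 1 : Fin k → ℕ) j) = s i
    rw [Finset.prod_eq_single i (fun j _ hj => by rw [Pi.single_eq_of_ne hj, pow_zero])
      (fun h => absurd (Finset.mem_univ i) h)]
    rw [Pi.single_eq_same, pow_one]
  -- `Ψ F = b`
  have hΨF : Ψ F = b := by
    rw [hF, map_sum]
    have hterm : ∀ i : Fin k, Ψ (MonoidAlgebra.single (gen i) (b.coeff (s i)))
        = MonoidAlgebra.single (s i) (b.coeff (s i)) := by
      intro i
      show MonoidAlgebra.mapDomain π (MonoidAlgebra.single (gen i) (b.coeff (s i))) = _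
      rw [MonoidAlgebra.mapDomain_single, hπgen]
    rw [Finset.sum_congr rfl fun i _ => hterm i]
    have hb : ∑ m ∈ b.coeff.support, MonoidAlgebra.single m (b.coeff m) = b := by
      conv_rhs => rw [← MonoidAlgebra.sum_coeff_single b]
      rfl
    calc ∑ i : Fin k, MonoidAlgebra.single (s i) (b.coeff (s i))
        = ∑ x : {x // x ∈ b.coeff.support}, MonoidAlgebra.single (x : M) (b.coeff x) :=
          Equiv.sum_comp σ.symm (fun x : {x // x ∈ b.coeff.support} =>
            MonoidAlgebra.single (x : M) (b.coeff x))
      _ = ∑ m ∈ b.coeff.support, MonoidAlgebra.single m (b.coeff m) :=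
          Finset.sum_coe_sort b.coeff.support (fun m => MonoidAlgebra.single (m : M) (b.coeff m))
      _ = b := hb
  -- transfer of coefficient membership
  have htrans : ∀ H : MonoidAlgebra B (Multiplicative (Fin k → ℕ)), H.coeff.support ⊆ V →
      (∀ m : M, (Ψ H).coeff m ∈ A) → ∀ x, (Φ H).coeff x ∈ A := by
    intro H hsub hΨH x
    rw [hΦ_apply]
    rcases Finset.eq_empty_or_nonempty (H.coeff.support.filter fun v => χ v = x) with hemp | hne
    · rw [hemp, Finset.sum_empty]; exact A.zero_mem
    · obtain ⟨v₀, hv₀⟩ := hne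
      obtain ⟨hv₀s, hv₀x⟩ := Finset.mem_filter.mp hv₀
      have hset : H.coeff.support.filter (fun v => χ v = x)
          = H.coeff.support.filter (fun v => π v = π v₀) := by
        apply Finset.filter_congr
        intro v hv
        have hvV : v ∈ V := hsub hv
        have hv₀V : v₀ ∈ V := hsub hv₀s
        rw [← hv₀x]
        exact hχ_iff v hvV v₀ hv₀V
      rw [hset, ← hΨ_apply]
      exact hΨH (π v₀)
  -- apply the core lemma to `Φ F`
  have hsub2 : (F * F).coeff.support ⊆ V := by
    intro v hv
    rw [hV]
    exact Finset.mem_union_left _ (Finset.mem_union_right _ hv)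
  have hsub3 : (F * F * F).coeff.support ⊆ V := by
    intro v hv
    rw [hV]
    exact Finset.mem_union_right _ hv
  have hsub1 : F.coeff.support ⊆ V := by
    intro v hv
    rw [hV]
    exact Finset.mem_union_left _ (Finset.mem_union_left _ hv)
  have hcore := core A hA (Φ F) ?_ ?_
  rotate_left
  · rw [mem_coeffs_iff]
    intro x
    rw [← map_mul]
    refine htrans (F * F) hsub2 (fun m => ?_) x
    rw [map_mul, hΨF]
    exact h2 m
  · rw [mem_coeffs_iff]
    intro x
    rw [← map_mul, ← map_mul]
    refine htrans (F * F * F) hsub3 (fun m => ?_) x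
    rw [map_mul, map_mul, hΨF]
    exact h3 m
  -- extract the coefficient at `m₀`
  obtain ⟨i₀, hi₀⟩ := hs_surj m₀ hm₀
  have hgen_inj : ∀ i j : Fin k, gen i = gen j → i = j := by
    intro i j h
    by_contra hne
    have h2' := congrArg (fun v : Multiplicative (Fin k → ℕ) => Multiplicative.toAdd v i) h
    simp only [hgen, toAdd_ofAdd] at h2'
    rw [Pi.single_eq_same, Pi.single_eq_of_ne hne] at h2'
    exact one_ne_zero h2'
  have hFgen : F.coeff (gen i₀) = b.coeff m₀ := by
    rw [hF, MonoidAlgebra.coeff_sum, Finset.sum_apply']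
    rw [Finset.sum_eq_single i₀ (fun j _ hj => ?_) (fun h => absurd (Finset.mem_univ i₀) h)]
    · rw [MonoidAlgebra.coeff_single, Finsupp.single_apply, if_pos rfl, hi₀]
    · rw [MonoidAlgebra.coeff_single, Finsupp.single_apply, if_neg fun hEq => hj (hgen_inj j i₀ hEq)]
  have hbm₀ : b.coeff m₀ ≠ 0 := Finsupp.mem_support_iff.mp hm₀
  have hgenV : gen i₀ ∈ V := by
    have : gen i₀ ∈ F.coeff.support := Finsupp.mem_support_iff.mpr (by rw [hFgen]; exact hbm₀)
    exact hsub1 this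
  have hfinal : (Φ F).coeff (χ (gen i₀)) = (Ψ F).coeff (π (gen i₀)) := by
    rw [hΦ_apply, hΨ_apply]
    refine Finset.sum_congr ?_ fun _ _ => rfl
    apply Finset.filter_congr
    intro v hv
    exact hχ_iff v (hsub1 hv) (gen i₀) hgenV
  rw [mem_coeffs_iff] at hcore
  have hAm := hcore (χ (gen i₀))
  rw [hfinal, hΨF, hπgen, hi₀] at hAm
  exact hAm


end SIC

/-- **Sarwar, Remark 3.4.**  Let `A ⊆ B` be an extension of commutative rings and `M` a
positive commutative cancellative torsion-free monoid (not necessarily finitely generated).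
If `A` is subintegrally closed in `B`, then `A[M]` is subintegrally closed in `B[M]`. -/
theorem monoidAlgebra_subintegrallyClosed
    {B : Type*} [CommRing B] (A : Subring B)
    {M : Type*} [CancelCommMonoid M]
    (htf : MulTorsionFree M) (hpos : IsPositiveMonoid M)
    (hA : A.IsSubintegrallyClosedIn) :
    (monoidAlgebraSubring A (⊤ : Submonoid M)).IsSubintegrallyClosedIn := by
  intro x hx2 hx3
  rw [SIC.monoidAlgebraSubring_top] at hx2 hx3 ⊢
  have h2 : ∀ m, (x * x).coeff m ∈ A := by
    rw [← pow_two]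
    exact (SIC.mem_coeffs_iff A _).mp hx2
  have h3 : ∀ m, (x * x * x).coeff m ∈ A := by
    have : x * x * x = x ^ 3 := by ring
    rw [this]
    exact (SIC.mem_coeffs_iff A _).mp hx3
  exact (SIC.mem_coeffs_iff A _).mpr (SIC.transfer A htf hA x h2 h3)
end
end

section
/- Let A ⊆ B be an extension of commutative rings and let g ∈ B satisfy g² ∈ A and g³ ∈ A. Let I be the A-submodule of B generated by {g², 1 + g + g²} and J the A-submodule of B generated by {g², 1 − g + g²}. Then IJ = A; in particular, I is an invertible A-submodule of B, i.e., I ∈ 𝓘(A,B). -/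
open scoped Classical

noncomputable section

/-- **Sarwar, proof of Theorem 1.2(d)(ii).**  Let `A ⊆ B` be an extension of commutative
rings and `g ∈ B` with `g² ∈ A` and `g³ ∈ A`.  Then the `A`-submodules
`I = (g², 1 + g + g²)` and `J = (g², 1 - g + g²)` of `B` satisfy `I·J = A`; in particular
`I` is an invertible `A`-submodule of `B`, i.e. `I ∈ 𝓘(A,B)`. -/
theorem span_mul_span_eq_one_of_sq_cube_mem
    {B : Type*} [CommRing B] (A : Subring B) (g : B)
    (h2 : g ^ 2 ∈ A) (h3 : g ^ 3 ∈ A) :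
    Submodule.span A ({g ^ 2, 1 + g + g ^ 2} : Set B) *
        Submodule.span A ({g ^ 2, 1 - g + g ^ 2} : Set B) = 1 ∧
      IsUnit (Submodule.span A ({g ^ 2, 1 + g + g ^ 2} : Set B)) := by
  have h4 : g ^ 4 ∈ A := by
    have := mul_mem h2 h2
    convert this using 1
    ring
  have key : Submodule.span A ({g ^ 2, 1 + g + g ^ 2} : Set B) *
      Submodule.span A ({g ^ 2, 1 - g + g ^ 2} : Set B) = 1 := by
    apply le_antisymm
    · rw [Submodule.span_mul_span]
      rw [Submodule.span_le]
      rintro x ⟨a, ha, b, hb, rfl⟩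
      have hmem : a * b ∈ A := by
        rcases ha with rfl | rfl <;> rcases hb with rfl | rfl
        · convert h4 using 1; ring
        · have : g ^ 2 * (1 - g + g ^ 2) = g ^ 2 - g ^ 3 + g ^ 4 := by ring
          rw [this]; exact add_mem (sub_mem h2 h3) h4
        · have : (1 + g + g ^ 2) * g ^ 2 = g ^ 2 + g ^ 3 + g ^ 4 := by ring
          rw [this]; exact add_mem (add_mem h2 h3) h4
        · have : (1 + g + g ^ 2) * (1 - g + g ^ 2) = 1 + g ^ 2 + g ^ 4 := by ring
          rw [this]; exact add_mem (add_mem (one_mem A) h2) h4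
      exact Submodule.mem_one.mpr ⟨⟨a * b, hmem⟩, rfl⟩
    · rw [Submodule.one_le]
      have hp : (1 + g + g ^ 2) * (1 - g + g ^ 2) ∈
          Submodule.span A ({g ^ 2, 1 + g + g ^ 2} : Set B) *
            Submodule.span A ({g ^ 2, 1 - g + g ^ 2} : Set B) :=
        Submodule.mul_mem_mul
          (Submodule.subset_span (Set.mem_insert_of_mem _ rfl))
          (Submodule.subset_span (Set.mem_insert_of_mem _ rfl))
      have hq : g ^ 2 * g ^ 2 ∈
          Submodule.span A ({g ^ 2, 1 + g + g ^ 2} : Set B) *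
            Submodule.span A ({g ^ 2, 1 - g + g ^ 2} : Set B) :=
        Submodule.mul_mem_mul
          (Submodule.subset_span (Set.mem_insert _ _))
          (Submodule.subset_span (Set.mem_insert _ _))
      have h1A : (1 : B) - g ^ 2 ∈ A := sub_mem (one_mem A) h2
      have := Submodule.add_mem _
        (Submodule.smul_mem _ (⟨1 - g ^ 2, h1A⟩ : A) hp)
        (Submodule.smul_mem _ (⟨g ^ 2, h2⟩ : A) hq)
      convert this using 1
      show (1 : B) = (1 - g ^ 2) * ((1 + g + g ^ 2) * (1 - g + g ^ 2)) +
        g ^ 2 * (g ^ 2 * g ^ 2)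
      ring
  exact ⟨key, IsUnit.of_mul_eq_one _ key⟩
end
end

section
/- Let A ⊆ B be an extension of commutative rings and M ⊆ N an extension of commutative cancellative torsion-free monoids. Let b ∈ B with b² ∈ A and b³ ∈ A, and let m ∈ M. In the monoid algebra B[N], let I be the A[M]-submodule generated by {b², 1 − b·m} and J the A[M]-submodule generated by {b², 1 + b·m}, where b·m denotes the product of b with the basis element of B[N] corresponding to m. Then IJ = A[M]; in particular, I is an invertible A[M]-submodule of B[N], i.e., I ∈ 𝓘(A[M],B[N]). -/
open scoped Classical
open scoped Pointwise

noncomputable section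

theorem span_mul_span_eq_one_monoidAlgebra'
    {B : Type*} [CommRing B] (A : Subring B)
    {N : Type*} [CancelCommMonoid N] (M : Submonoid N)
    (b : B) (hb2 : b ^ 2 ∈ A) (hb3 : b ^ 3 ∈ A) (m : N) (hm : m ∈ M) :
    Submodule.span (Subring.closure {x : MonoidAlgebra B N | ∃ a ∈ A, ∃ m ∈ M, x = MonoidAlgebra.single m a})
          ({MonoidAlgebra.single 1 (b ^ 2), 1 - MonoidAlgebra.single m b} :
            Set (MonoidAlgebra B N)) *
        Submodule.span _
          ({MonoidAlgebra.single 1 (b ^ 2), 1 + MonoidAlgebra.single m b} :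
            Set (MonoidAlgebra B N)) = 1 := by
  set R := Subring.closure {x : MonoidAlgebra B N | ∃ a ∈ A, ∃ m ∈ M, x = MonoidAlgebra.single m a} with hR
  have hmem : ∀ (a : B) (k : N), a ∈ A → k ∈ M → MonoidAlgebra.single k a ∈ R :=
    fun a k ha hk => Subring.subset_closure ⟨a, ha, k, hk, rfl⟩
  have hone : ∀ w : MonoidAlgebra B N, w ∈ R → w ∈ (1 : Submodule R (MonoidAlgebra B N)) :=
    fun w hw => Submodule.mem_one.mpr ⟨⟨w, hw⟩, rfl⟩
  set x : MonoidAlgebra B N := MonoidAlgebra.single m b with hx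
  set g : MonoidAlgebra B N := MonoidAlgebra.single 1 (b ^ 2) with hg
  have hxp : ∀ n : ℕ, x ^ n = MonoidAlgebra.single (m ^ n) (b ^ n) := fun n =>
    MonoidAlgebra.single_pow _ _ n
  have hgx : g * x = MonoidAlgebra.single m (b ^ 3) := by
    rw [hg, hx, MonoidAlgebra.single_mul_single, one_mul]
    ring_nf
  have hgg : g * g = MonoidAlgebra.single 1 (b ^ 2 * b ^ 2) := by
    rw [hg, MonoidAlgebra.single_mul_single, one_mul]
  rw [Submodule.span_mul_span]
  apply le_antisymm
  · rw [Submodule.span_le]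
    rintro z ⟨y1, hy1, y2, hy2, rfl⟩
    apply hone
    beta_reduce
    rcases hy1 with rfl | rfl <;> rcases hy2 with rfl | rfl
    · rw [hgg]; exact hmem _ _ (mul_mem hb2 hb2) (one_mem _)
    · rw [mul_add, mul_one, hgx]
      exact add_mem (hmem _ _ hb2 (one_mem _)) (hmem _ _ hb3 hm)
    · rw [sub_mul, one_mul, mul_comm x g, hgx]
      exact sub_mem (hmem _ _ hb2 (one_mem _)) (hmem _ _ hb3 hm)
    · have : (1 - x) * (1 + x) = 1 - MonoidAlgebra.single (m ^ 2) (b ^ 2) := by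
        rw [← hxp]; ring
      rw [this]
      exact sub_mem (one_mem _) (hmem _ _ hb2 (pow_mem hm 2))
  · rw [Submodule.one_le]
    -- scalars
    have hc1 : (1 + MonoidAlgebra.single (m ^ 3) (b ^ 3)) ∈ R :=
      add_mem (one_mem _) (hmem _ _ hb3 (pow_mem hm 3))
    have hc2 : ((1 + MonoidAlgebra.single (m ^ 3) (b ^ 3)) * MonoidAlgebra.single (m ^ 2) (1 : B)) ∈ R :=
      mul_mem hc1 (hmem _ _ (one_mem _) (pow_mem hm 2))
    have hc3 : (MonoidAlgebra.single (m ^ 6) (b ^ 2)) ∈ R := hmem _ _ hb2 (pow_mem hm 6)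
    have hp1 : (1 - x) * (1 + x) ∈ ({g, 1 - x} * {g, 1 + x} : Set (MonoidAlgebra B N)) :=
      Set.mul_mem_mul (Set.mem_insert_of_mem _ rfl) (Set.mem_insert_of_mem _ rfl)
    have hp2 : (1 - x) * g ∈ ({g, 1 - x} * {g, 1 + x} : Set (MonoidAlgebra B N)) :=
      Set.mul_mem_mul (Set.mem_insert_of_mem _ rfl) (Set.mem_insert _ _)
    have hp3 : g * g ∈ ({g, 1 - x} * {g, 1 + x} : Set (MonoidAlgebra B N)) :=
      Set.mul_mem_mul (Set.mem_insert _ _) (Set.mem_insert _ _)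
    have key : (1 : MonoidAlgebra B N) =
        (⟨_, hc1⟩ : R) • ((1 - x) * (1 + x)) + (⟨_, hc2⟩ : R) • ((1 - x) * g)
          + (⟨_, hc3⟩ : R) • (g * g) := by
      show (1 : MonoidAlgebra B N) =
        (1 + MonoidAlgebra.single (m ^ 3) (b ^ 3)) * ((1 - x) * (1 + x))
          + ((1 + MonoidAlgebra.single (m ^ 3) (b ^ 3)) * MonoidAlgebra.single (m ^ 2) (1 : B)) * ((1 - x) * g)
          + MonoidAlgebra.single (m ^ 6) (b ^ 2) * (g * g)
      have h2g : MonoidAlgebra.single (m ^ 2) (1 : B) * g = x ^ 2 := by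
        rw [hg, MonoidAlgebra.single_mul_single, mul_one, one_mul, hxp]
      have h6g : MonoidAlgebra.single (m ^ 6) (b ^ 2) * (g * g) = x ^ 6 := by
        rw [hgg, MonoidAlgebra.single_mul_single, mul_one, hxp]
        ring_nf
      have h3 : MonoidAlgebra.single (m ^ 3) (b ^ 3) = x ^ 3 := (hxp 3).symm
      calc (1 : MonoidAlgebra B N)
          = (1 + x ^ 3) * (1 - x ^ 3) + x ^ 6 := by ring
        _ = _ := by
            rw [show ((1 + MonoidAlgebra.single (m ^ 3) (b ^ 3)) * MonoidAlgebra.single (m ^ 2) (1:B)) * ((1 - x) * g)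
                  = (1 + MonoidAlgebra.single (m ^ 3) (b ^ 3)) * ((1 - x) * (MonoidAlgebra.single (m ^ 2) (1:B) * g)) by ring]
            rw [h2g, h6g, h3]
            ring
    have hfin : (⟨_, hc1⟩ : R) • ((1 - x) * (1 + x)) + (⟨_, hc2⟩ : R) • ((1 - x) * g)
          + (⟨_, hc3⟩ : R) • (g * g)
        ∈ Submodule.span R ({g, 1 - x} * {g, 1 + x} : Set (MonoidAlgebra B N)) :=
      add_mem (add_mem
        (Submodule.smul_mem _ _ (Submodule.subset_span hp1))
        (Submodule.smul_mem _ _ (Submodule.subset_span hp2)))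
        (Submodule.smul_mem _ _ (Submodule.subset_span hp3))
    rwa [← key] at hfin

/-- **Sarwar, proof of Theorem 1.2(d)(i).**  Let `A ⊆ B` be an extension of commutative rings
and `M ⊆ N` an extension of commutative cancellative torsion-free monoids.  Let `b ∈ B` with
`b² ∈ A` and `b³ ∈ A`, and let `m ∈ M`.  Then the `A[M]`-submodules `I = (b², 1 - b·m)` and
`J = (b², 1 + b·m)` of `B[N]` satisfy `I·J = A[M]`; in particular `I` is an invertible
`A[M]`-submodule of `B[N]`, i.e. `I ∈ 𝓘(A[M],B[N])`. -/
theorem span_mul_span_eq_one_monoidAlgebra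
    {B : Type*} [CommRing B] (A : Subring B)
    {N : Type*} [CancelCommMonoid N] (htf : MulTorsionFree N) (M : Submonoid N)
    (b : B) (hb2 : b ^ 2 ∈ A) (hb3 : b ^ 3 ∈ A) (m : N) (hm : m ∈ M) :
    Submodule.span (monoidAlgebraSubring A M)
          ({MonoidAlgebra.single 1 (b ^ 2), 1 - MonoidAlgebra.single m b} :
            Set (MonoidAlgebra B N)) *
        Submodule.span (monoidAlgebraSubring A M)
          ({MonoidAlgebra.single 1 (b ^ 2), 1 + MonoidAlgebra.single m b} :
            Set (MonoidAlgebra B N)) = 1 ∧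
      IsUnit (Submodule.span (monoidAlgebraSubring A M)
        ({MonoidAlgebra.single 1 (b ^ 2), 1 - MonoidAlgebra.single m b} :
          Set (MonoidAlgebra B N))) := by
  have h := span_mul_span_eq_one_monoidAlgebra' A M b hb2 hb3 m hm
  have h2 := mul_comm
    (Submodule.span (monoidAlgebraSubring A M)
      ({MonoidAlgebra.single 1 (b ^ 2), 1 + MonoidAlgebra.single m b} : Set (MonoidAlgebra B N)))
    (Submodule.span (monoidAlgebraSubring A M)
      ({MonoidAlgebra.single 1 (b ^ 2), 1 - MonoidAlgebra.single m b} : Set (MonoidAlgebra B N)))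
  exact ⟨h, ⟨⟨_, _, h, h2.trans h⟩, rfl⟩⟩
end
end
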